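/- arXiv:2503.09817 — 11 statements merged into one kernel-verified Lean document; each statement's English description precedes it below -/
import Mathlib

section
/- Fix γ ∈ [0,1] and a probability density m₀ on ℝ^d. Let p̂_t and p̃_t be time-dependent C¹ probability density paths on ℝ^d generated (via the continuity equation) by C¹ vector fields v̂_t and ṽ_t respectively, with common source p̂₀ = p̃₀ = m₀; assume (1−γ)p̂_t(x) + γp̃_t(x) > 0 for all (t,x) and that ∫‖v̂_t‖² p̂_t dx and ∫‖ṽ_t‖² p̃_t dx are finite for each t. Define v_t(x) := ((1−γ)p̂_t(x)v̂_t(x) + γp̃_t(x)ṽ_t(x)) / ((1−γ)p̂_t(x) + γp̃_t(x)). Then: (i) for every t ∈ [0,1] and every measurable w : ℝ^d → ℝ^d, (1−γ)∫‖v_t(x)−v̂_t(x)‖² p̂_t(x)dx + γ∫‖v_t(x)−ṽ_t(x)‖² p̃_t(x)dx ≤ (1−γ)∫‖w(x)−v̂_t(x)‖² p̂_t(x)dx + γ∫‖w(x)−ṽ_t(x)‖² p̃_t(x)dx, so v_t minimizes the mixed flow-matching objective over all vector fields; (ii) v_t generates the probability path m_t := (1−γ)p̂_t + γp̃_t, which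 satisfies m_0 = m₀ at time 0 and m_1 = (1−γ)p̂₁ + γp̃₁ at time 1. In particular, if p̂₁ is a density of the one-step kernel P(·|s,a) and p̃₁ is a density of (P^π m₁^{prev})(·|s,a) for some family m₁^{prev}, then m_1 is a density of the Bellman update (T^π m₁^{prev})(·|s,a). -/
open MeasureTheory
open scoped ENNReal NNReal

noncomputable section

/-- The divergence of a vector field on `ℝ^d` (trace of the Jacobian). -/
def diverg {d : ℕ} (F : EuclideanSpace ℝ (Fin d) → EuclideanSpace ℝ (Fin d))
    (x : EuclideanSpace ℝ (Fin d)) : ℝ :=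
  ∑ i : Fin d, fderiv ℝ F x (EuclideanSpace.single i 1) i

lemma quad_key {E : Type*} [NormedAddCommGroup E] [InnerProductSpace ℝ E]
    (α β : ℝ) (hα : 0 ≤ α) (hβ : 0 ≤ β) (hs : 0 < α + β) (a b w : E) :
    α * ‖(α+β)⁻¹ • (α • a + β • b) - a‖^2 + β * ‖(α+β)⁻¹ • (α • a + β • b) - b‖^2
      ≤ α * ‖w - a‖^2 + β * ‖w - b‖^2 := by
  set u := (α+β)⁻¹ • (α • a + β • b) with hu
  have hsu : (α+β) • u = α • a + β • b := by
    rw [hu, smul_smul, mul_inv_cancel₀ hs.ne', one_smul]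
  have h1 : (α+β) * inner ℝ u u = α * inner ℝ u a + β * inner ℝ u b := by
    have := congrArg (fun z => (inner ℝ u z : ℝ)) hsu
    simpa [inner_add_right, inner_smul_right] using this
  have h2 : (α+β) * inner ℝ w u = α * inner ℝ w a + β * inner ℝ w b := by
    have := congrArg (fun z => (inner ℝ w z : ℝ)) hsu
    simpa [inner_add_right, inner_smul_right] using this
  have hwu : 0 ≤ (α+β) * ‖w - u‖^2 := mul_nonneg hs.le (sq_nonneg _)
  have e1 := norm_sub_sq_real w u
  have e2 := norm_sub_sq_real w a
  have e3 := norm_sub_sq_real w b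
  have e4 := norm_sub_sq_real u a
  have e5 := norm_sub_sq_real u b
  have e6 := real_inner_self_eq_norm_sq u
  nlinarith [hwu, e1, e2, e3, e4, e5, e6, h1, h2]

/-- The density-weighted mixture vector field (i) minimizes the mixed
flow-matching objective, and (ii) generates the mixture probability path
`m_t := (1−γ)p̂_t + γp̃_t`, which starts at `m₀` and ends at `(1−γ)p̂₁ + γp̃₁`; in particular,
if `p̂₁` is a density of the one-step kernel `P(·|s,a)` and `p̃₁` is a density of
`(P^π m₁^{prev})(·|s,a)`, then `m₁` is a density of the Bellman update
`(T^π m₁^{prev})(·|s,a)`. -/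
theorem mixture_vector_field_minimizes_and_generates_bellman_update
    {d : ℕ} {𝒜 : Type*} [MeasurableSpace 𝒜]
    (γ : ℝ) (hγ0 : 0 ≤ γ) (hγ1 : γ ≤ 1)
    (m₀ : EuclideanSpace ℝ (Fin d) → ℝ)
    (hm₀nn : ∀ x, 0 ≤ m₀ x) (hm₀int : (∫ x, m₀ x) = 1)
    (phat ptil : ℝ → EuclideanSpace ℝ (Fin d) → ℝ)
    (vhat vtil : ℝ → EuclideanSpace ℝ (Fin d) → EuclideanSpace ℝ (Fin d))
    (hphatC1 : ContDiff ℝ 1 fun q : ℝ × EuclideanSpace ℝ (Fin d) => phat q.1 q.2)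
    (hptilC1 : ContDiff ℝ 1 fun q : ℝ × EuclideanSpace ℝ (Fin d) => ptil q.1 q.2)
    (hvhatC1 : ContDiff ℝ 1 fun q : ℝ × EuclideanSpace ℝ (Fin d) => vhat q.1 q.2)
    (hvtilC1 : ContDiff ℝ 1 fun q : ℝ × EuclideanSpace ℝ (Fin d) => vtil q.1 q.2)
    (hphatnn : ∀ t x, 0 ≤ phat t x) (hptilnn : ∀ t x, 0 ≤ ptil t x)
    (hphatint : ∀ t, (∫ x, phat t x) = 1) (hptilint : ∀ t, (∫ x, ptil t x) = 1)
    -- the vector fields generate the paths via the continuity equation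
    (hgenhat : ∀ t ∈ Set.Ioo (0 : ℝ) 1, ∀ x,
      deriv (fun τ => phat τ x) t + diverg (fun y => phat t y • vhat t y) x = 0)
    (hgentil : ∀ t ∈ Set.Ioo (0 : ℝ) 1, ∀ x,
      deriv (fun τ => ptil τ x) t + diverg (fun y => ptil t y • vtil t y) x = 0)
    -- common source
    (hsource : ∀ x, phat 0 x = m₀ x ∧ ptil 0 x = m₀ x)
    -- positivity of the mixture and finite second moments of the fields
    (hpos : ∀ t x, 0 < (1 - γ) * phat t x + γ * ptil t x)
    (hvhatL2 : ∀ t, (∫⁻ x, (‖vhat t x‖₊ : ℝ≥0∞) ^ (2 : ℕ) * ENNReal.ofReal (phat t x)) < ⊤)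
    (hvtilL2 : ∀ t, (∫⁻ x, (‖vtil t x‖₊ : ℝ≥0∞) ^ (2 : ℕ) * ENNReal.ofReal (ptil t x)) < ⊤)
    -- the mixture field and path
    (v : ℝ → EuclideanSpace ℝ (Fin d) → EuclideanSpace ℝ (Fin d))
    (hv : ∀ t x, v t x = ((1 - γ) * phat t x + γ * ptil t x)⁻¹ •
        (((1 - γ) * phat t x) • vhat t x + (γ * ptil t x) • vtil t x))
    (m : ℝ → EuclideanSpace ℝ (Fin d) → ℝ)
    (hm : ∀ t x, m t x = (1 - γ) * phat t x + γ * ptil t x)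
    -- MDP data for the Bellman interpretation
    (P : EuclideanSpace ℝ (Fin d) × 𝒜 → Measure (EuclideanSpace ℝ (Fin d)))
    (hPmeas : Measurable P) (hPprob : ∀ sa, IsProbabilityMeasure (P sa))
    (π : EuclideanSpace ℝ (Fin d) → 𝒜) (hπ : Measurable π)
    (mprev : EuclideanSpace ℝ (Fin d) × 𝒜 → Measure (EuclideanSpace ℝ (Fin d)))
    (hmprev : Measurable mprev) (hmprevprob : ∀ sa, IsProbabilityMeasure (mprev sa))
    (s : EuclideanSpace ℝ (Fin d)) (a : 𝒜) :
    -- (i) minimization of the mixed flow-matching objective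
    (∀ t ∈ Set.Icc (0 : ℝ) 1,
      ∀ w : EuclideanSpace ℝ (Fin d) → EuclideanSpace ℝ (Fin d), Measurable w →
        ENNReal.ofReal (1 - γ) *
            (∫⁻ x, (‖v t x - vhat t x‖₊ : ℝ≥0∞) ^ (2 : ℕ) * ENNReal.ofReal (phat t x))
          + ENNReal.ofReal γ *
            (∫⁻ x, (‖v t x - vtil t x‖₊ : ℝ≥0∞) ^ (2 : ℕ) * ENNReal.ofReal (ptil t x))
        ≤ ENNReal.ofReal (1 - γ) *
            (∫⁻ x, (‖w x - vhat t x‖₊ : ℝ≥0∞) ^ (2 : ℕ) * ENNReal.ofReal (phat t x))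
          + ENNReal.ofReal γ *
            (∫⁻ x, (‖w x - vtil t x‖₊ : ℝ≥0∞) ^ (2 : ℕ) * ENNReal.ofReal (ptil t x))) ∧
    -- (ii) v generates the mixture path m
    (∀ t ∈ Set.Ioo (0 : ℝ) 1, ∀ x,
      deriv (fun τ => m τ x) t + diverg (fun y => m t y • v t y) x = 0) ∧
    (∀ x, m 0 x = m₀ x) ∧
    (∀ x, m 1 x = (1 - γ) * phat 1 x + γ * ptil 1 x) ∧
    -- in particular: the Bellman interpretation at time 1
    ((volume.withDensity fun x => ENNReal.ofReal (phat 1 x)) = P (s, a) →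
      (volume.withDensity fun x => ENNReal.ofReal (ptil 1 x)) =
        (P (s, a)).bind (fun s' => mprev (s', π s')) →
      (volume.withDensity fun x => ENNReal.ofReal (m 1 x)) =
        ENNReal.ofReal (1 - γ) • P (s, a) +
          ENNReal.ofReal γ • (P (s, a)).bind (fun s' => mprev (s', π s'))) := by
  have h1γ : (0:ℝ) ≤ 1 - γ := by linarith
  -- continuity of slices
  have hphatc : ∀ t, Continuous fun y => phat t y := fun t =>
    hphatC1.continuous.comp (continuous_const.prodMk continuous_id)
  have hptilc : ∀ t, Continuous fun y => ptil t y := fun t =>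
    hptilC1.continuous.comp (continuous_const.prodMk continuous_id)
  have hvhatc : ∀ t, Continuous fun y => vhat t y := fun t =>
    hvhatC1.continuous.comp (continuous_const.prodMk continuous_id)
  have hvtilc : ∀ t, Continuous fun y => vtil t y := fun t =>
    hvtilC1.continuous.comp (continuous_const.prodMk continuous_id)
  refine ⟨?_, ?_, ?_, ?_, ?_⟩
  · -- (i) minimization
    intro t ht w hw
    have hconv : ∀ (c p : ℝ) (u : EuclideanSpace ℝ (Fin d)), 0 ≤ c → 0 ≤ p →
        ENNReal.ofReal c * ((‖u‖₊ : ℝ≥0∞) ^ (2:ℕ) * ENNReal.ofReal p)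
          = ENNReal.ofReal (c * (‖u‖^2 * p)) := by
      intro c p u hc hp
      rw [← enorm_eq_nnnorm, ← ofReal_norm, ← ENNReal.ofReal_pow (norm_nonneg _),
        ← ENNReal.ofReal_mul (pow_nonneg (norm_nonneg _) _), ← ENNReal.ofReal_mul hc]
    have hreal : ∀ x,
        (1-γ)*(‖v t x - vhat t x‖^2 * phat t x) + γ*(‖v t x - vtil t x‖^2 * ptil t x)
          ≤ (1-γ)*(‖w x - vhat t x‖^2 * phat t x) + γ*(‖w x - vtil t x‖^2 * ptil t x) := by
      intro x
      have h := quad_key ((1-γ)*phat t x) (γ*ptil t x)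
        (mul_nonneg h1γ (hphatnn t x)) (mul_nonneg hγ0 (hptilnn t x)) (hpos t x)
        (vhat t x) (vtil t x) (w x)
      rw [← hv t x] at h
      nlinarith [h]
    have hf₂ : Measurable fun x =>
        ENNReal.ofReal (1-γ) * ((‖w x - vhat t x‖₊ : ℝ≥0∞) ^ (2:ℕ) * ENNReal.ofReal (phat t x)) := by
      refine Measurable.const_mul (Measurable.mul (f := fun x => (‖w x - vhat t x‖₊ : ℝ≥0∞) ^ (2:ℕ)) (g := fun x => ENNReal.ofReal (phat t x)) ?_ ?_) _
      · exact ((hw.sub (hvhatc t).measurable).nnnorm.coe_nnreal_ennreal).pow_const 2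
      · exact ENNReal.continuous_ofReal.measurable.comp (hphatc t).measurable
    calc ENNReal.ofReal (1 - γ) *
            (∫⁻ x, (‖v t x - vhat t x‖₊ : ℝ≥0∞) ^ (2 : ℕ) * ENNReal.ofReal (phat t x))
          + ENNReal.ofReal γ *
            (∫⁻ x, (‖v t x - vtil t x‖₊ : ℝ≥0∞) ^ (2 : ℕ) * ENNReal.ofReal (ptil t x))
        = (∫⁻ x, ENNReal.ofReal (1-γ) * ((‖v t x - vhat t x‖₊ : ℝ≥0∞) ^ (2:ℕ) * ENNReal.ofReal (phat t x)))
          + (∫⁻ x, ENNReal.ofReal γ * ((‖v t x - vtil t x‖₊ : ℝ≥0∞) ^ (2:ℕ) * ENNReal.ofReal (ptil t x))) := by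
          rw [lintegral_const_mul' _ _ ENNReal.ofReal_ne_top,
            lintegral_const_mul' _ _ ENNReal.ofReal_ne_top]
      _ ≤ ∫⁻ x, ENNReal.ofReal (1-γ) * ((‖v t x - vhat t x‖₊ : ℝ≥0∞) ^ (2:ℕ) * ENNReal.ofReal (phat t x))
            + ENNReal.ofReal γ * ((‖v t x - vtil t x‖₊ : ℝ≥0∞) ^ (2:ℕ) * ENNReal.ofReal (ptil t x)) :=
          le_lintegral_add _ _
      _ ≤ ∫⁻ x, ENNReal.ofReal (1-γ) * ((‖w x - vhat t x‖₊ : ℝ≥0∞) ^ (2:ℕ) * ENNReal.ofReal (phat t x))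
            + ENNReal.ofReal γ * ((‖w x - vtil t x‖₊ : ℝ≥0∞) ^ (2:ℕ) * ENNReal.ofReal (ptil t x)) := by
          refine lintegral_mono fun x => ?_
          rw [hconv _ _ _ h1γ (hphatnn t x), hconv _ _ _ hγ0 (hptilnn t x),
            hconv _ _ _ h1γ (hphatnn t x), hconv _ _ _ hγ0 (hptilnn t x),
            ← ENNReal.ofReal_add
              (mul_nonneg h1γ (mul_nonneg (sq_nonneg _) (hphatnn t x)))
              (mul_nonneg hγ0 (mul_nonneg (sq_nonneg _) (hptilnn t x))),
            ← ENNReal.ofReal_add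
              (mul_nonneg h1γ (mul_nonneg (sq_nonneg _) (hphatnn t x)))
              (mul_nonneg hγ0 (mul_nonneg (sq_nonneg _) (hptilnn t x)))]
          exact ENNReal.ofReal_le_ofReal (hreal x)
      _ = (∫⁻ x, ENNReal.ofReal (1-γ) * ((‖w x - vhat t x‖₊ : ℝ≥0∞) ^ (2:ℕ) * ENNReal.ofReal (phat t x)))
          + (∫⁻ x, ENNReal.ofReal γ * ((‖w x - vtil t x‖₊ : ℝ≥0∞) ^ (2:ℕ) * ENNReal.ofReal (ptil t x))) :=
          lintegral_add_left' hf₂.aemeasurable _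
      _ = ENNReal.ofReal (1 - γ) *
            (∫⁻ x, (‖w x - vhat t x‖₊ : ℝ≥0∞) ^ (2 : ℕ) * ENNReal.ofReal (phat t x))
          + ENNReal.ofReal γ *
            (∫⁻ x, (‖w x - vtil t x‖₊ : ℝ≥0∞) ^ (2 : ℕ) * ENNReal.ofReal (ptil t x)) := by
          rw [lintegral_const_mul' _ _ ENNReal.ofReal_ne_top,
            lintegral_const_mul' _ _ ENNReal.ofReal_ne_top]
  · -- (ii) continuity equation
    intro t ht x
    have hpt : DifferentiableAt ℝ (fun τ => phat τ x) t :=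
      ((hphatC1.differentiable one_ne_zero) (t, x)).comp (g := fun q : ℝ × EuclideanSpace ℝ (Fin d) => phat q.1 q.2) t
        ((differentiableAt_fun_id (𝕜 := ℝ) (x := t)).prodMk (differentiableAt_const x))
    have hqt : DifferentiableAt ℝ (fun τ => ptil τ x) t :=
      ((hptilC1.differentiable one_ne_zero) (t, x)).comp (g := fun q : ℝ × EuclideanSpace ℝ (Fin d) => ptil q.1 q.2) t
        ((differentiableAt_fun_id (𝕜 := ℝ) (x := t)).prodMk (differentiableAt_const x))
    have hpx : DifferentiableAt ℝ (fun y => phat t y) x :=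
      ((hphatC1.differentiable one_ne_zero) (t, x)).comp x
        ((differentiableAt_const t).prodMk differentiableAt_id)
    have hqx : DifferentiableAt ℝ (fun y => ptil t y) x :=
      ((hptilC1.differentiable one_ne_zero) (t, x)).comp x
        ((differentiableAt_const t).prodMk differentiableAt_id)
    have hvx : DifferentiableAt ℝ (fun y => vhat t y) x :=
      ((hvhatC1.differentiable one_ne_zero) (t, x)).comp x
        ((differentiableAt_const t).prodMk differentiableAt_id)
    have hwx : DifferentiableAt ℝ (fun y => vtil t y) x :=
      ((hvtilC1.differentiable one_ne_zero) (t, x)).comp x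
        ((differentiableAt_const t).prodMk differentiableAt_id)
    have hfhat : DifferentiableAt ℝ (fun y => phat t y • vhat t y) x := hpx.smul hvx
    have hftil : DifferentiableAt ℝ (fun y => ptil t y • vtil t y) x := hqx.smul hwx
    have hderiv : deriv (fun τ => m τ x) t
        = (1-γ) * deriv (fun τ => phat τ x) t + γ * deriv (fun τ => ptil τ x) t := by
      simp only [hm]
      rw [deriv_fun_add (hpt.const_mul _) (hqt.const_mul _), deriv_const_mul _ hpt,
        deriv_const_mul _ hqt]
    have hmv : (fun y => m t y • v t y)
        = fun y => (1-γ) • (phat t y • vhat t y) + γ • (ptil t y • vtil t y) := by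
      funext y
      rw [hm, hv, smul_smul, mul_inv_cancel₀ (hpos t y).ne', one_smul,
        smul_smul, smul_smul]
    have hdiv : diverg (fun y => m t y • v t y) x
        = (1-γ) * diverg (fun y => phat t y • vhat t y) x
          + γ * diverg (fun y => ptil t y • vtil t y) x := by
      rw [hmv]
      unfold diverg
      have hD : fderiv ℝ (fun y => (1-γ) • (phat t y • vhat t y) + γ • (ptil t y • vtil t y)) x
          = (1-γ) • fderiv ℝ (fun y => phat t y • vhat t y) x
            + γ • fderiv ℝ (fun y => ptil t y • vtil t y) x := by
        rw [fderiv_fun_add (hfhat.fun_const_smul _) (hftil.fun_const_smul _),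
          fderiv_fun_const_smul hfhat, fderiv_fun_const_smul hftil]
      rw [hD]
      simp [ContinuousLinearMap.add_apply, ContinuousLinearMap.smul_apply,
        PiLp.add_apply, PiLp.smul_apply, smul_eq_mul, Finset.sum_add_distrib,
        Finset.mul_sum]
    rw [hderiv, hdiv]
    linear_combination (1-γ) * (hgenhat t ht x) + γ * (hgentil t ht x)
  · intro x
    rw [hm, (hsource x).1, (hsource x).2]; ring
  · intro x
    exact hm 1 x
  · intro hP hPt
    have hmeas1 : Measurable fun x => ENNReal.ofReal (phat 1 x) :=
      ENNReal.continuous_ofReal.measurable.comp (hphatc 1).measurable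
    have hmeas2 : Measurable fun x => ENNReal.ofReal (ptil 1 x) :=
      ENNReal.continuous_ofReal.measurable.comp (hptilc 1).measurable
    have hsplit : (fun x => ENNReal.ofReal (m 1 x))
        = (ENNReal.ofReal (1-γ) • fun x => ENNReal.ofReal (phat 1 x))
          + (ENNReal.ofReal γ • fun x => ENNReal.ofReal (ptil 1 x)) := by
      funext x
      simp only [Pi.add_apply, Pi.smul_apply, smul_eq_mul, hm]
      rw [ENNReal.ofReal_add (mul_nonneg h1γ (hphatnn 1 x)) (mul_nonneg hγ0 (hptilnn 1 x)),
        ENNReal.ofReal_mul h1γ, ENNReal.ofReal_mul hγ0]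
    rw [hsplit, withDensity_add_left (hmeas1.const_smul _),
      withDensity_smul _ hmeas1, withDensity_smul _ hmeas2, hP, hPt]
end
end

section
/- Fix t ∈ [0,1], k ∈ [1,∞) and γ ∈ [0,1). Let p, q : S×A → P(S) be measurable families of probability measures with finite k-th moments, and suppose that for every ε > 0 there exists a jointly measurable family Γ̃_ε(·|s,a) of couplings of p(·|s,a) and q(·|s,a) such that (∫‖x−y‖^k dΓ̃_ε(x,y|s,a))^{1/k} ≤ W_k(p(·|s,a), q(·|s,a)) + ε for all (s,a). Then sup_{s,a} W_k((B_t^π p)(·|s,a), (B_t^π q)(·|s,a)) ≤ γ^{1/k} · sup_{s,a} W_k(p(·|s,a), q(·|s,a)); that is, the probability-path Bellman operator B_t^π is a γ^{1/k}-contraction in the supremum k-Wasserstein distance. -/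
open MeasureTheory
open scoped ENNReal NNReal

noncomputable section

/-- The state space `S = ℝ^d`. -/
abbrev St (d : ℕ) := EuclideanSpace ℝ (Fin d)

/-- `(P^π m)(·|s,a) := ∫ m(·|s',π(s')) P(ds'|s,a)`. -/
def Ppi {d : ℕ} {𝒜 : Type*} [MeasurableSpace 𝒜]
    (P : St d × 𝒜 → Measure (St d)) (π : St d → 𝒜)
    (m : St d × 𝒜 → Measure (St d)) : St d × 𝒜 → Measure (St d) :=
  fun sa => (P sa).bind fun s' => m (s', π s')

/-- `P_t(·|s,a) := ∫ p_{t|1}(·|x₁) P(dx₁|s,a)` for a conditional path kernel `p_{t|1}`. -/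
def Pt {d : ℕ} {𝒜 : Type*} [MeasurableSpace 𝒜]
    (P : St d × 𝒜 → Measure (St d)) (κ : St d → Measure (St d)) :
    St d × 𝒜 → Measure (St d) :=
  fun sa => (P sa).bind κ

/-- The probability-path Bellman operator
`(B_t^π m)(·|s,a) := (1−γ) P_t(·|s,a) + γ (P^π m)(·|s,a)`. -/
def Bpath {d : ℕ} {𝒜 : Type*} [MeasurableSpace 𝒜] (γ : ℝ)
    (P : St d × 𝒜 → Measure (St d)) (π : St d → 𝒜) (κ : St d → Measure (St d))
    (m : St d × 𝒜 → Measure (St d)) : St d × 𝒜 → Measure (St d) :=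
  fun sa => ENNReal.ofReal (1 - γ) • Pt P κ sa + ENNReal.ofReal γ • Ppi P π m sa

/-- `Γ` is a coupling of `μ` and `ν`: a measure on the product whose marginals are `μ`, `ν`. -/
def IsCoupling {d : ℕ} (Γ : Measure (St d × St d)) (μ ν : Measure (St d)) : Prop :=
  Γ.map Prod.fst = μ ∧ Γ.map Prod.snd = ν

/-- The `k`-Wasserstein distance for the Euclidean distance on `ℝ^d`. -/
def Wk {d : ℕ} (k : ℝ) (μ ν : Measure (St d)) : ℝ≥0∞ :=
  ⨅ (Γ : Measure (St d × St d)) (_ : IsProbabilityMeasure Γ) (_ : IsCoupling Γ μ ν),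
    (∫⁻ p, edist p.1 p.2 ^ k ∂Γ) ^ (1 / k)


/-- Map commutes with bind. -/
lemma map_bind_aux {α β γ' : Type*} [MeasurableSpace α] [MeasurableSpace β] [MeasurableSpace γ']
    (μ : Measure α) {κ : α → Measure β} (hκ : Measurable κ) {f : β → γ'} (hf : Measurable f) :
    (μ.bind κ).map f = μ.bind (fun x => (κ x).map f) := by
  have hm : Measurable (fun x => (κ x).map f) := (Measure.measurable_map f hf).comp hκ
  ext s hs
  rw [Measure.map_apply hf hs, Measure.bind_apply (hf hs) hκ.aemeasurable, Measure.bind_apply hs hm.aemeasurable]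
  simp_rw [Measure.map_apply hf hs]

lemma isProbabilityMeasure_bind_aux {α β : Type*} [MeasurableSpace α] [MeasurableSpace β]
    {μ : Measure α} [IsProbabilityMeasure μ] {κ : α → Measure β} (hκ : Measurable κ)
    (hκp : ∀ a, IsProbabilityMeasure (κ a)) : IsProbabilityMeasure (μ.bind κ) := by
  constructor
  rw [Measure.bind_apply MeasurableSet.univ hκ.aemeasurable]
  simp [fun a => (hκp a).measure_univ]

lemma Wk_le_cost {d : ℕ} {k : ℝ} {μ ν : Measure (St d)} (Γ : Measure (St d × St d))
    (hprob : IsProbabilityMeasure Γ) (hc : IsCoupling Γ μ ν) :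
    Wk k μ ν ≤ (∫⁻ p, edist p.1 p.2 ^ k ∂Γ) ^ (1 / k) :=
  iInf_le_of_le Γ (iInf_le_of_le hprob (iInf_le _ hc))

/-- The probability-path Bellman operator `B_t^π` is a `γ^{1/k}`-contraction
in the supremum `k`-Wasserstein distance. -/
theorem bellman_operator_wasserstein_contraction {d : ℕ} {𝒜 : Type*} [MeasurableSpace 𝒜]
    (t : ℝ) (ht : t ∈ Set.Icc (0 : ℝ) 1)
    (k : ℝ) (hk : 1 ≤ k)
    (γ : ℝ) (hγ0 : 0 ≤ γ) (hγ1 : γ < 1)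
    (P : St d × 𝒜 → Measure (St d)) (hPmeas : Measurable P)
    (hPprob : ∀ sa, IsProbabilityMeasure (P sa))
    (π : St d → 𝒜) (hπ : Measurable π)
    (κ : St d → Measure (St d)) (hκmeas : Measurable κ)
    (hκprob : ∀ x, IsProbabilityMeasure (κ x))
    (p q : St d × 𝒜 → Measure (St d))
    (hpmeas : Measurable p) (hqmeas : Measurable q)
    (hpprob : ∀ sa, IsProbabilityMeasure (p sa)) (hqprob : ∀ sa, IsProbabilityMeasure (q sa))
    -- finite k-th moments
    (hpmom : ∀ sa, (∫⁻ x, (‖x‖₊ : ℝ≥0∞) ^ k ∂p sa) < ⊤)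
    (hqmom : ∀ sa, (∫⁻ x, (‖x‖₊ : ℝ≥0∞) ^ k ∂q sa) < ⊤)
    -- jointly measurable families of ε-optimal couplings
    (hcpl : ∀ ε : ℝ≥0∞, 0 < ε → ∃ Γ : St d × 𝒜 → Measure (St d × St d),
      Measurable Γ ∧ (∀ sa, IsProbabilityMeasure (Γ sa)) ∧
      (∀ sa, IsCoupling (Γ sa) (p sa) (q sa)) ∧
      ∀ sa, (∫⁻ pr, edist pr.1 pr.2 ^ k ∂Γ sa) ^ (1 / k) ≤ Wk k (p sa) (q sa) + ε) :
    (⨆ sa : St d × 𝒜, Wk k (Bpath γ P π κ p sa) (Bpath γ P π κ q sa)) ≤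
      ENNReal.ofReal γ ^ (1 / k) * ⨆ sa : St d × 𝒜, Wk k (p sa) (q sa) := by
  have hk0 : (0 : ℝ) < k := lt_of_lt_of_le one_pos hk
  have hkinv : (0 : ℝ) < 1 / k := by positivity
  have hkk : (1 / k) * k = 1 := by field_simp
  set M := ⨆ sa : St d × 𝒜, Wk k (p sa) (q sa) with hM
  set c := ENNReal.ofReal γ ^ (1 / k) with hcdef
  have hc1 : c ≤ 1 :=
    ENNReal.rpow_le_one (ENNReal.ofReal_le_one.mpr hγ1.le) hkinv.le
  have hedistm : Measurable fun pr : St d × St d => edist pr.1 pr.2 ^ k :=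
    measurable_edist.pow_const k
  have key : ∀ ε : ℝ≥0∞, 0 < ε →
      (⨆ sa : St d × 𝒜, Wk k (Bpath γ P π κ p sa) (Bpath γ P π κ q sa)) ≤ c * (M + ε) := by
    intro ε hε
    obtain ⟨Γ, hΓmeas, hΓprob, hΓcpl, hΓcost⟩ := hcpl ε hε
    refine iSup_le fun sa => ?_
    have hdiagm : Measurable (fun x : St d => (x, x)) := measurable_id.prodMk measurable_id
    have hpair : Measurable (fun s' : St d => (s', π s')) := measurable_id.prodMk hπ
    have hκΓ : Measurable (fun s' : St d => Γ (s', π s')) := hΓmeas.comp hpair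
    haveI : IsProbabilityMeasure (P sa) := hPprob sa
    haveI hPt : IsProbabilityMeasure (Pt P κ sa) := isProbabilityMeasure_bind_aux hκmeas hκprob
    haveI hbp : IsProbabilityMeasure ((P sa).bind fun s' => Γ (s', π s')) :=
      isProbabilityMeasure_bind_aux hκΓ fun s' => hΓprob _
    haveI : IsProbabilityMeasure ((Pt P κ sa).map fun x : St d => (x, x)) :=
      Measure.isProbabilityMeasure_map hdiagm.aemeasurable
    set Γ' : Measure (St d × St d) :=
      ENNReal.ofReal (1 - γ) • (Pt P κ sa).map (fun x : St d => (x, x)) +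
        ENNReal.ofReal γ • (P sa).bind (fun s' => Γ (s', π s')) with hΓ'
    have hΓ'prob : IsProbabilityMeasure Γ' := by
      constructor
      rw [hΓ']
      simp only [Measure.add_apply, Measure.smul_apply, smul_eq_mul, measure_univ, mul_one]
      rw [← ENNReal.ofReal_add (by linarith) hγ0]
      norm_num
    have hfst : Γ'.map Prod.fst = Bpath γ P π κ p sa := by
      rw [hΓ', Measure.map_add _ _ measurable_fst, Measure.map_smul, Measure.map_smul,
        Measure.map_map measurable_fst hdiagm,
        map_bind_aux _ hκΓ measurable_fst]
      have h1 : (Prod.fst ∘ fun x : St d => (x, x)) = id := rfl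
      have h2 : (fun s' : St d => (Γ (s', π s')).map Prod.fst) = fun s' => p (s', π s') :=
        funext fun s' => (hΓcpl _).1
      rw [h1, Measure.map_id, h2]
      rfl
    have hsnd : Γ'.map Prod.snd = Bpath γ P π κ q sa := by
      rw [hΓ', Measure.map_add _ _ measurable_snd, Measure.map_smul, Measure.map_smul,
        Measure.map_map measurable_snd hdiagm,
        map_bind_aux _ hκΓ measurable_snd]
      have h1 : (Prod.snd ∘ fun x : St d => (x, x)) = id := rfl
      have h2 : (fun s' : St d => (Γ (s', π s')).map Prod.snd) = fun s' => q (s', π s') :=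
        funext fun s' => (hΓcpl _).2
      rw [h1, Measure.map_id, h2]
      rfl
    have hinner : ∀ s' : St d,
        (∫⁻ pr, edist pr.1 pr.2 ^ k ∂Γ (s', π s')) ≤ (M + ε) ^ k := by
      intro s'
      have h1 : (∫⁻ pr, edist pr.1 pr.2 ^ k ∂Γ (s', π s')) ^ (1 / k) ≤ M + ε :=
        (hΓcost (s', π s')).trans (add_le_add_left (le_iSup (fun sa => Wk k (p sa) (q sa)) _) ε)
      calc (∫⁻ pr, edist pr.1 pr.2 ^ k ∂Γ (s', π s'))
          = ((∫⁻ pr, edist pr.1 pr.2 ^ k ∂Γ (s', π s')) ^ (1 / k)) ^ k := by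
            rw [← ENNReal.rpow_mul, hkk, ENNReal.rpow_one]
        _ ≤ (M + ε) ^ k := ENNReal.rpow_le_rpow h1 hk0.le
    have hcost : (∫⁻ pr, edist pr.1 pr.2 ^ k ∂Γ') ≤ ENNReal.ofReal γ * (M + ε) ^ k := by
      rw [hΓ', lintegral_add_measure, lintegral_smul_measure, lintegral_smul_measure,
        lintegral_map hedistm hdiagm, Measure.lintegral_bind hκΓ.aemeasurable hedistm.aemeasurable]
      simp only [edist_self, ENNReal.zero_rpow_of_pos hk0, lintegral_zero, smul_eq_mul, mul_zero, zero_add]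
      refine mul_le_mul_right (α := ℝ≥0∞) ?_ _
      calc (∫⁻ s', ∫⁻ pr, edist pr.1 pr.2 ^ k ∂Γ (s', π s') ∂P sa)
          ≤ ∫⁻ _, (M + ε) ^ k ∂P sa := lintegral_mono fun s' => hinner s'
        _ = (M + ε) ^ k := by simp
    calc Wk k (Bpath γ P π κ p sa) (Bpath γ P π κ q sa)
        ≤ (∫⁻ pr, edist pr.1 pr.2 ^ k ∂Γ') ^ (1 / k) :=
          Wk_le_cost Γ' hΓ'prob ⟨hfst, hsnd⟩
      _ ≤ (ENNReal.ofReal γ * (M + ε) ^ k) ^ (1 / k) := ENNReal.rpow_le_rpow hcost hkinv.le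
      _ = c * (M + ε) := by
          rw [ENNReal.mul_rpow_of_nonneg _ _ hkinv.le, ← ENNReal.rpow_mul,
            mul_comm k (1 / k), hkk, ENNReal.rpow_one]
    done
  refine ENNReal.le_of_forall_pos_le_add fun δ hδ _ => ?_
  have hδ' : (0 : ℝ≥0∞) < δ := by exact_mod_cast hδ
  calc (⨆ sa : St d × 𝒜, Wk k (Bpath γ P π κ p sa) (Bpath γ P π κ q sa))
      ≤ c * (M + δ) := key δ hδ'
    _ = c * M + c * δ := mul_add c M δ
    _ ≤ c * M + δ := by
        gcongr
        calc c * (δ : ℝ≥0∞) ≤ 1 * δ := mul_le_mul_left hc1 _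
          _ = δ := one_mul _
end
end

section
/- Fix t ∈ [0,1] and γ ∈ [0,1). Let m₁ : S×A → P(S) be a measurable family of probability measures and define its time-t marginal path m_t(·|s,a) := ∫ p_{t|1}(·|x₁) m₁(dx₁|s,a). Then the time-t marginal path of the Bellman update of m₁ satisfies, for all (s,a): ∫ p_{t|1}(·|x₁) (T^π m₁)(dx₁|s,a) = (B_t^π m_t)(·|s,a) = (1−γ)P_t(·|s,a) + γ∫ m_t(·|s',π(s')) P(ds'|s,a). Consequently, whenever the probability path at iteration n of TD-Conditional Flow Matching is in marginal form over its time-1 distribution m₁^{(n)}, the next-iterate probability path m_t^{(n+1)}(·|s,a) := ∫ p_{t|1}(·|x₁) (T^π m₁^{(n)})(dx₁|s,a) equals (B_t^π m_t^{(n)})(·|s,a). -/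
open MeasureTheory
open scoped ENNReal NNReal

noncomputable section

/-- The Bellman operator `(T^π m)(·|s,a) := (1−γ) P(·|s,a) + γ (P^π m)(·|s,a)`. -/
def Tpi {d : ℕ} {𝒜 : Type*} [MeasurableSpace 𝒜] (γ : ℝ)
    (P : St d × 𝒜 → Measure (St d)) (π : St d → 𝒜)
    (m : St d × 𝒜 → Measure (St d)) : St d × 𝒜 → Measure (St d) :=
  fun sa => ENNReal.ofReal (1 - γ) • P sa + ENNReal.ofReal γ • Ppi P π m sa

/-- The time-`t` marginal path of the Bellman update of `m₁` is the
probability-path Bellman update of the time-`t` marginal path of `m₁`. -/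
theorem marginal_path_of_bellman_update {d : ℕ} {𝒜 : Type*} [MeasurableSpace 𝒜]
    (t : ℝ) (ht : t ∈ Set.Icc (0 : ℝ) 1)
    (γ : ℝ) (hγ0 : 0 ≤ γ) (hγ1 : γ < 1)
    (P : St d × 𝒜 → Measure (St d)) (hPmeas : Measurable P)
    (hPprob : ∀ sa, IsProbabilityMeasure (P sa))
    (π : St d → 𝒜) (hπ : Measurable π)
    (κ : St d → Measure (St d)) (hκmeas : Measurable κ)
    (hκprob : ∀ x, IsProbabilityMeasure (κ x))
    (m₁ : St d × 𝒜 → Measure (St d)) (hm₁meas : Measurable m₁)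
    (hm₁prob : ∀ sa, IsProbabilityMeasure (m₁ sa)) :
    ∀ sa : St d × 𝒜,
      (Tpi γ P π m₁ sa).bind κ =
        Bpath γ P π κ (fun sa' => (m₁ sa').bind κ) sa := by
  intro sa
  have hκs : ∀ {s : Set (St d)}, MeasurableSet s → Measurable fun x => κ x s :=
    fun hs => (Measure.measurable_coe hs).comp hκmeas
  have hPpi : (Ppi P π m₁ sa).bind κ = Ppi P π (fun sa' => (m₁ sa').bind κ) sa := by
    simp only [Ppi]
    exact Measure.bind_bind (hm₁meas.comp (measurable_id.prodMk hπ)).aemeasurable hκmeas.aemeasurable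
  ext s hs
  rw [Tpi, Measure.bind_apply hs hκmeas.aemeasurable]
  simp only [Bpath, Pt, Measure.add_apply, Measure.smul_apply, smul_eq_mul]
  rw [lintegral_add_measure, lintegral_smul_measure, lintegral_smul_measure,
    ← Measure.bind_apply hs hκmeas.aemeasurable, ← Measure.bind_apply hs hκmeas.aemeasurable, hPpi]
  simp only [smul_eq_mul]
end
end

section
/- Fix t ∈ [0,1] and γ ∈ [0,1). Let m₀ ∈ P(S) be a source distribution and let p_{t|0,1} be a Markov kernel from S×S to S satisfying the marginalization identity ∫ p_{t|0,1}(·|x₀,x₁) m₀(dx₀) = p_{t|1}(·|x₁) for every x₁ ∈ S. Let μ : S×A → P(S×S) be any measurable family of joint distributions over (noise, data) pairs, and define m_t(·|s,a) := ∫ p_{t|0,1}(·|x₀,x₁) μ(d(x₀,x₁)|s,a). Define the bootstrapped coupling Γ(·|s,a) := (1−γ)·(m₀ ⊗ P(·|s,a)) + γ·∫ μ(·|s',π(s')) P(ds'|s,a), where m₀ ⊗ P(·|s,a) denotes the product measure on S×S, and define m'_t(·|s,a) := ∫ p_{t|0,1}(·|x₀,x₁) Γ(d(x₀,x₁)|s,a).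 Then m'_t(·|s,a) = (B_t^π m_t)(·|s,a) for all (s,a). Consequently, the probability paths generated by coupled TD-Conditional Flow Matching satisfy the update m_t^{(n+1)} = B_t^π m_t^{(n)}. -/
open MeasureTheory
open scoped ENNReal NNReal

noncomputable section

/-- Coupled TD-CFM: marginalizing the two-sided conditional path over the
bootstrapped coupling `Γ` yields the probability-path Bellman update of the marginal path. -/
theorem coupled_marginal_path_is_bellman_update {d : ℕ} {𝒜 : Type*} [MeasurableSpace 𝒜]
    (t : ℝ) (ht : t ∈ Set.Icc (0 : ℝ) 1)
    (γ : ℝ) (hγ0 : 0 ≤ γ) (hγ1 : γ < 1)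
    (P : St d × 𝒜 → Measure (St d)) (hPmeas : Measurable P)
    (hPprob : ∀ sa, IsProbabilityMeasure (P sa))
    (π : St d → 𝒜) (hπ : Measurable π)
    -- the one-sided conditional path kernel p_{t|1}
    (κ : St d → Measure (St d)) (hκmeas : Measurable κ)
    (hκprob : ∀ x, IsProbabilityMeasure (κ x))
    -- the source distribution m₀
    (m₀ : Measure (St d)) (hm₀ : IsProbabilityMeasure m₀)
    -- the two-sided conditional path kernel p_{t|0,1}
    (κ01 : St d × St d → Measure (St d)) (hκ01meas : Measurable κ01)
    (hκ01prob : ∀ x, IsProbabilityMeasure (κ01 x))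
    -- marginalization identity: ∫ p_{t|0,1}(·|x₀,x₁) m₀(dx₀) = p_{t|1}(·|x₁)
    (hmarg : ∀ x₁ : St d, m₀.bind (fun x₀ => κ01 (x₀, x₁)) = κ x₁)
    -- joint (noise, data) distributions
    (μ : St d × 𝒜 → Measure (St d × St d)) (hμmeas : Measurable μ)
    (hμprob : ∀ sa, IsProbabilityMeasure (μ sa))
    -- the bootstrapped coupling
    (Γ : St d × 𝒜 → Measure (St d × St d))
    (hΓ : ∀ sa : St d × 𝒜, Γ sa =
      ENNReal.ofReal (1 - γ) • m₀.prod (P sa) +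
        ENNReal.ofReal γ • (P sa).bind (fun s' => μ (s', π s'))) :
    ∀ sa : St d × 𝒜,
      (Γ sa).bind κ01 = Bpath γ P π κ (fun sa' => (μ sa').bind κ01) sa := fun sa => by
  have hf : Measurable fun x : St d × St d => κ01 x := hκ01meas
  have hP := hPprob sa
  have hκs : ∀ s : Set (St d), MeasurableSet s →
      Measurable fun x : St d × St d => κ01 x s := fun s hs =>
    (Measure.measurable_coe hs).comp hκ01meas
  ext s hs
  rw [Measure.bind_apply hs hκ01meas.aemeasurable, hΓ sa]
  rw [lintegral_add_measure, lintegral_smul_measure, lintegral_smul_measure]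
  have h1 : ∫⁻ x, κ01 x s ∂(m₀.prod (P sa)) = (Pt P κ sa) s := by
    rw [MeasureTheory.lintegral_prod_symm' _ (hκs s hs)]
    have : ∀ x₁, ∫⁻ x₀, κ01 (x₀, x₁) s ∂m₀ = κ x₁ s := by
      intro x₁
      rw [← hmarg x₁, Measure.bind_apply hs]
      exact (hκ01meas.comp (measurable_id.prodMk measurable_const)).aemeasurable
    simp only [this]
    rw [Pt, Measure.bind_apply hs hκmeas.aemeasurable]
  have h2 : ∫⁻ x, κ01 x s ∂((P sa).bind fun s' => μ (s', π s')) =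
      (Ppi P π (fun sa' => (μ sa').bind κ01) sa) s := by
    have hμπ : Measurable fun s' : St d => μ (s', π s') :=
      hμmeas.comp (measurable_id.prodMk hπ)
    rw [Measure.lintegral_bind hμπ.aemeasurable (hκs s hs).aemeasurable, Ppi,
      Measure.bind_apply hs
        (show Measurable fun s' : St d => (μ (s', π s')).bind κ01 from
          (Measure.measurable_bind' hκ01meas).comp hμπ).aemeasurable]
    congr 1
    ext s'
    rw [Measure.bind_apply hs hκ01meas.aemeasurable]
  rw [h1, h2]
  simp [Bpath]
end
end

section
/- Fix γ ∈ [0,1) and suppose m^π : S×A → P(S) is a measurable family of probability measures satisfying the Bellman fixed-point equation of the normalized successor measure, m^π(·|s,a) = (1−γ)P(·|s,a) + γ∫ m^π(·|s',π(s')) P(ds'|s,a), for all (s,a). For t ∈ [0,1] define the Monte-Carlo probability path m_t^{MC}(·|s,a) := ∫ p_{t|1}(·|x₁) m^π(dx₁|s,a). Then for every t ∈ [0,1], m_t^{MC} is a fixed point of the probability-path Bellman operator: (B_t^π m_t^{MC})(·|s,a) = m_t^{MC}(·|s,a) for all (s,a). -/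
open MeasureTheory
open scoped ENNReal NNReal

noncomputable section

/-- If `m^π` satisfies the Bellman fixed-point equation of the normalized
successor measure, then its Monte-Carlo probability path `m_t^{MC}` is a fixed point of the
probability-path Bellman operator `B_t^π`. -/
theorem monteCarlo_path_is_fixed_point {d : ℕ} {𝒜 : Type*} [MeasurableSpace 𝒜]
    (t : ℝ) (ht : t ∈ Set.Icc (0 : ℝ) 1)
    (γ : ℝ) (hγ0 : 0 ≤ γ) (hγ1 : γ < 1)
    (P : St d × 𝒜 → Measure (St d)) (hPmeas : Measurable P)
    (hPprob : ∀ sa, IsProbabilityMeasure (P sa))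
    (π : St d → 𝒜) (hπ : Measurable π)
    (κ : St d → Measure (St d)) (hκmeas : Measurable κ)
    (hκprob : ∀ x, IsProbabilityMeasure (κ x))
    (mpi : St d × 𝒜 → Measure (St d)) (hmeas : Measurable mpi)
    (hprob : ∀ sa, IsProbabilityMeasure (mpi sa))
    (hfix : ∀ sa : St d × 𝒜,
      mpi sa = ENNReal.ofReal (1 - γ) • P sa +
        ENNReal.ofReal γ • (P sa).bind (fun s' => mpi (s', π s'))) :
    ∀ sa : St d × 𝒜,
      Bpath γ P π κ (fun sa' => (mpi sa').bind κ) sa = (mpi sa).bind κ := by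
  intro sa
  have hf : Measurable fun s' : St d => mpi (s', π s') :=
    hmeas.comp (measurable_id.prodMk hπ)
  have hfb : Measurable fun s' : St d => (mpi (s', π s')).bind κ :=
    (Measure.measurable_bind' hκmeas).comp hf
  conv_rhs => rw [hfix sa]
  have hlin : (ENNReal.ofReal (1 - γ) • P sa +
        ENNReal.ofReal γ • (P sa).bind (fun s' => mpi (s', π s'))).bind κ =
      ENNReal.ofReal (1 - γ) • (P sa).bind κ +
        ENNReal.ofReal γ • ((P sa).bind (fun s' => mpi (s', π s'))).bind κ := by
    ext s hs
    rw [Measure.bind_apply hs hκmeas.aemeasurable, Measure.add_apply, Measure.smul_apply,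
      Measure.smul_apply, Measure.bind_apply hs hκmeas.aemeasurable, Measure.bind_apply hs hκmeas.aemeasurable,
      lintegral_add_measure, lintegral_smul_measure, lintegral_smul_measure]
  rw [hlin, Measure.bind_bind hf.aemeasurable hκmeas.aemeasurable]
  rfl
end
end

section
/- Fix t ∈ [0,1] and γ ∈ [0,1). Suppose p, q : S×A → P(S) are two measurable families of probability measures with finite first moments which are both fixed points of the probability-path Bellman operator (B_t^π p = p and B_t^π q = q), with sup_{s,a} W₁(p(·|s,a), q(·|s,a)) < ∞, and suppose that for every ε > 0 there exists a jointly measurable family Γ̃_ε(·|s,a) of couplings of p(·|s,a) and q(·|s,a) with ∫‖x−y‖ dΓ̃_ε(x,y|s,a) ≤ W₁(p(·|s,a), q(·|s,a)) + ε for all (s,a). Then p(·|s,a) = q(·|s,a) for every (s,a); i.e., the fixed point of B_t^π is unique among such families. -/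
open MeasureTheory
open scoped ENNReal NNReal

noncomputable section

/-- The `1`-Wasserstein distance for the Euclidean distance on `ℝ^d`. -/
def W1 {d : ℕ} (μ ν : Measure (St d)) : ℝ≥0∞ :=
  ⨅ (Γ : Measure (St d × St d)) (_ : IsProbabilityMeasure Γ) (_ : IsCoupling Γ μ ν),
    ∫⁻ p, edist p.1 p.2 ∂Γ


section Aux

lemma W1_le_cost {d : ℕ} {μ ν : Measure (St d)} (Γ : Measure (St d × St d))
    (hΓ : IsProbabilityMeasure Γ) (hc : IsCoupling Γ μ ν) :
    W1 μ ν ≤ ∫⁻ p, edist p.1 p.2 ∂Γ :=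
  iInf_le_of_le Γ (iInf_le_of_le hΓ (iInf_le _ hc))

lemma closed_le_of_couplings {d : ℕ} {μ ν : Measure (St d)}
    [IsProbabilityMeasure ν]
    (h : ∀ ε : ℝ≥0∞, 0 < ε → ∃ Γ : Measure (St d × St d),
      IsCoupling Γ μ ν ∧ (∫⁻ p, edist p.1 p.2 ∂Γ) ≤ ε)
    {F : Set (St d)} (hF : IsClosed F) : μ F ≤ ν F := by
  have key : ∀ δ : ℝ, 0 < δ → μ F ≤ ν (Metric.thickening δ F) := by
    intro δ hδ
    refine ENNReal.le_of_forall_pos_le_add fun ε' hε' _ => ?_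
    have hδ0 : ENNReal.ofReal δ ≠ 0 := by simp [hδ]
    have hε'0 : (ε' : ℝ≥0∞) ≠ 0 := by exact_mod_cast hε'.ne'
    obtain ⟨Γ, hc, hcost⟩ := h (ENNReal.ofReal δ * ε')
      (by exact ENNReal.mul_pos hδ0 hε'0)
    have hmarkov : Γ {p : St d × St d | ENNReal.ofReal δ ≤ edist p.1 p.2} ≤ ε' := by
      refine (meas_ge_le_lintegral_div (measurable_edist.aemeasurable) hδ0
        ENNReal.ofReal_ne_top).trans ?_
      refine (ENNReal.div_le_div_right hcost _).trans ?_
      rw [mul_comm, mul_div_assoc, ENNReal.div_self hδ0 ENNReal.ofReal_ne_top, mul_one]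
    have hsub : (Prod.fst ⁻¹' F : Set (St d × St d)) ⊆
        (Prod.snd ⁻¹' Metric.thickening δ F) ∪
        {p : St d × St d | ENNReal.ofReal δ ≤ edist p.1 p.2} := by
      rintro ⟨x, y⟩ hx
      by_cases hlt : edist x y < ENNReal.ofReal δ
      · left
        rw [Set.mem_preimage, Metric.mem_thickening_iff]
        exact ⟨x, hx, by rw [dist_comm]; exact edist_lt_ofReal.mp hlt⟩
      · right; exact not_lt.mp hlt
    have h1 : μ F = Γ (Prod.fst ⁻¹' F) := by
      rw [← hc.1, Measure.map_apply measurable_fst hF.measurableSet]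
    have h2 : Γ (Prod.snd ⁻¹' Metric.thickening δ F) = ν (Metric.thickening δ F) := by
      rw [← hc.2, Measure.map_apply measurable_snd Metric.isOpen_thickening.measurableSet]
    calc μ F = Γ (Prod.fst ⁻¹' F) := h1
      _ ≤ Γ ((Prod.snd ⁻¹' Metric.thickening δ F) ∪ _) := measure_mono hsub
      _ ≤ Γ (Prod.snd ⁻¹' Metric.thickening δ F)
          + Γ {p : St d × St d | ENNReal.ofReal δ ≤ edist p.1 p.2} := measure_union_le _ _
      _ ≤ ν (Metric.thickening δ F) + ε' := by rw [h2]; exact add_le_add le_rfl hmarkov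
  have htend := tendsto_measure_thickening_of_isClosed
    (μ := ν) ⟨1, one_pos, measure_ne_top ν _⟩ hF
  refine ge_of_tendsto htend ?_
  filter_upwards [self_mem_nhdsWithin] with r hr
  exact key r hr

lemma eq_of_couplings {d : ℕ} {μ ν : Measure (St d)}
    [IsProbabilityMeasure μ] [IsProbabilityMeasure ν]
    (h : ∀ ε : ℝ≥0∞, 0 < ε → ∃ Γ : Measure (St d × St d),
      IsCoupling Γ μ ν ∧ (∫⁻ p, edist p.1 p.2 ∂Γ) ≤ ε) : μ = ν := by
  have hswap : ∀ ε : ℝ≥0∞, 0 < ε → ∃ Γ : Measure (St d × St d),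
      IsCoupling Γ ν μ ∧ (∫⁻ p, edist p.1 p.2 ∂Γ) ≤ ε := by
    intro ε hε
    obtain ⟨Γ, hc, hcost⟩ := h ε hε
    refine ⟨Γ.map Prod.swap, ⟨?_, ?_⟩, ?_⟩
    · rw [Measure.map_map measurable_fst measurable_swap]
      exact hc.2
    · rw [Measure.map_map measurable_snd measurable_swap]
      exact hc.1
    · rw [lintegral_map measurable_edist measurable_swap]
      simpa [edist_comm] using hcost
  refine MeasureTheory.ext_of_generate_finite {s : Set (St d) | IsClosed s}
    (BorelSpace.measurable_eq.trans borel_eq_generateFrom_isClosed) isPiSystem_isClosed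
    (fun s hs => le_antisymm (closed_le_of_couplings h hs)
      (closed_le_of_couplings hswap hs)) (by simp)

end Aux

/-- The fixed point of the probability-path Bellman operator `B_t^π` is
unique among measurable families with finite first moments admitting jointly measurable
near-optimal couplings. -/
theorem bellman_path_fixed_point_unique {d : ℕ} {𝒜 : Type*} [MeasurableSpace 𝒜]
    (t : ℝ) (ht : t ∈ Set.Icc (0 : ℝ) 1)
    (γ : ℝ) (hγ0 : 0 ≤ γ) (hγ1 : γ < 1)
    (P : St d × 𝒜 → Measure (St d)) (hPmeas : Measurable P)
    (hPprob : ∀ sa, IsProbabilityMeasure (P sa))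
    (π : St d → 𝒜) (hπ : Measurable π)
    (κ : St d → Measure (St d)) (hκmeas : Measurable κ)
    (hκprob : ∀ x, IsProbabilityMeasure (κ x))
    (p q : St d × 𝒜 → Measure (St d))
    (hpmeas : Measurable p) (hqmeas : Measurable q)
    (hpprob : ∀ sa, IsProbabilityMeasure (p sa)) (hqprob : ∀ sa, IsProbabilityMeasure (q sa))
    -- finite first moments
    (hpmom : ∀ sa, (∫⁻ x, (‖x‖₊ : ℝ≥0∞) ∂p sa) < ⊤)
    (hqmom : ∀ sa, (∫⁻ x, (‖x‖₊ : ℝ≥0∞) ∂q sa) < ⊤)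
    -- both are fixed points of B_t^π
    (hpfix : ∀ sa, Bpath γ P π κ p sa = p sa)
    (hqfix : ∀ sa, Bpath γ P π κ q sa = q sa)
    -- finite supremum Wasserstein distance
    (hfin : (⨆ sa : St d × 𝒜, W1 (p sa) (q sa)) < ⊤)
    -- jointly measurable families of ε-optimal couplings
    (hcpl : ∀ ε : ℝ≥0∞, 0 < ε → ∃ Γ : St d × 𝒜 → Measure (St d × St d),
      Measurable Γ ∧ (∀ sa, IsProbabilityMeasure (Γ sa)) ∧
      (∀ sa, IsCoupling (Γ sa) (p sa) (q sa)) ∧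
      ∀ sa, (∫⁻ pr, edist pr.1 pr.2 ∂Γ sa) ≤ W1 (p sa) (q sa) + ε) :
    ∀ sa : St d × 𝒜, p sa = q sa := by
  classical
  -- abbreviations
  set c : ℝ≥0∞ := ENNReal.ofReal γ with hc_def
  have hc1 : c < 1 := by
    rw [hc_def, ← ENNReal.ofReal_one]
    exact ENNReal.ofReal_lt_ofReal_iff_of_nonneg hγ0 |>.mpr hγ1
  set D : ℝ≥0∞ := ⨆ sa : St d × 𝒜, W1 (p sa) (q sa) with hD_def
  -- Step 1: contraction. For every ε > 0 and every sa, W1 (p sa) (q sa) ≤ c * (D + ε).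
  have hcontr : ∀ ε : ℝ≥0∞, 0 < ε → ∀ sa, W1 (p sa) (q sa) ≤ c * (D + ε) := by
    intro ε hε sa
    obtain ⟨Γ, hΓmeas, hΓprob, hΓcpl, hΓcost⟩ := hcpl ε hε
    have hk : Measurable fun s' : St d => Γ (s', π s') :=
      hΓmeas.comp (measurable_id.prodMk hπ)
    have hkp : Measurable fun s' : St d => p (s', π s') :=
      hpmeas.comp (measurable_id.prodMk hπ)
    have hkq : Measurable fun s' : St d => q (s', π s') :=
      hqmeas.comp (measurable_id.prodMk hπ)
    have hdiag : Measurable fun x : St d => (x, x) := measurable_id.prodMk measurable_id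
    set Γ' : Measure (St d × St d) :=
      ENNReal.ofReal (1 - γ) • (Pt P κ sa).map (fun x => (x, x))
        + c • (P sa).bind (fun s' => Γ (s', π s')) with hΓ'_def
    -- first marginal
    have hfst : Γ'.map Prod.fst = p sa := by
      rw [hΓ'_def, Measure.map_add _ _ measurable_fst, Measure.map_smul, Measure.map_smul,
        Measure.map_map measurable_fst hdiag]
      have h1 : ((fun p : St d × St d => p.1) ∘ fun x : St d => (x, x)) = id := rfl
      rw [h1, Measure.map_id]
      have h2 : ((P sa).bind fun s' => Γ (s', π s')).map Prod.fst
          = (P sa).bind fun s' => p (s', π s') := by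
        ext s hs
        rw [Measure.map_apply measurable_fst hs,
          Measure.bind_apply (measurable_fst hs) hk.aemeasurable, Measure.bind_apply hs hkp.aemeasurable]
        refine lintegral_congr fun a => ?_
        rw [← Measure.map_apply measurable_fst hs, (hΓcpl (a, π a)).1]
      rw [h2]
      exact hpfix sa
    have hsnd : Γ'.map Prod.snd = q sa := by
      rw [hΓ'_def, Measure.map_add _ _ measurable_snd, Measure.map_smul, Measure.map_smul,
        Measure.map_map measurable_snd hdiag]
      have h1 : ((fun p : St d × St d => p.2) ∘ fun x : St d => (x, x)) = id := rfl
      rw [h1, Measure.map_id]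
      have h2 : ((P sa).bind fun s' => Γ (s', π s')).map Prod.snd
          = (P sa).bind fun s' => q (s', π s') := by
        ext s hs
        rw [Measure.map_apply measurable_snd hs,
          Measure.bind_apply (measurable_snd hs) hk.aemeasurable, Measure.bind_apply hs hkq.aemeasurable]
        refine lintegral_congr fun a => ?_
        rw [← Measure.map_apply measurable_snd hs, (hΓcpl (a, π a)).2]
      rw [h2]
      exact hqfix sa
    have hΓ'prob : IsProbabilityMeasure Γ' := by
      constructor
      have : Γ' Set.univ = Γ'.map Prod.fst Set.univ := by
        rw [Measure.map_apply measurable_fst MeasurableSet.univ]; rfl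
      rw [this, hfst]
      exact measure_univ
    -- cost estimate
    have hcost : (∫⁻ pr, edist pr.1 pr.2 ∂Γ') ≤ c * (D + ε) := by
      rw [hΓ'_def, lintegral_add_measure, lintegral_smul_measure, lintegral_smul_measure]
      have hzero : (∫⁻ pr, edist pr.1 pr.2 ∂((Pt P κ sa).map fun x => (x, x))) = 0 := by
        rw [lintegral_map measurable_edist hdiag]
        simp
      rw [hzero, smul_zero, zero_add, smul_eq_mul]
      refine mul_le_mul_right ?_ c
      rw [Measure.lintegral_bind hk.aemeasurable measurable_edist.aemeasurable]
      calc (∫⁻ a, ∫⁻ pr, edist pr.1 pr.2 ∂Γ (a, π a) ∂P sa)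
          ≤ ∫⁻ _, D + ε ∂P sa := by
            refine lintegral_mono fun a => ?_
            exact (hΓcost (a, π a)).trans
              (add_le_add_left (le_iSup (fun sa => W1 (p sa) (q sa)) (a, π a)) ε)
        _ = D + ε := by
            rw [lintegral_const, measure_univ, mul_one]
    exact (W1_le_cost Γ' hΓ'prob ⟨hfst, hsnd⟩).trans hcost
  -- Step 2: D = 0.
  have hDle : D ≤ c * D := by
    refine ENNReal.le_of_forall_pos_le_add fun δ hδ hfin' => ?_
    have hδ' : (0 : ℝ≥0∞) < δ := by exact_mod_cast hδ
    have : D ≤ c * (D + δ) := iSup_le fun sa => hcontr δ hδ' sa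
    calc D ≤ c * (D + δ) := this
      _ = c * D + c * δ := by rw [mul_add]
      _ ≤ c * D + δ := add_le_add le_rfl (by
          calc c * (δ : ℝ≥0∞) ≤ 1 * δ := mul_le_mul_left hc1.le δ
            _ = δ := one_mul _)
  have hD0 : D = 0 := by
    by_contra hne
    have : c * D < 1 * D :=
      by rw [mul_comm c, mul_comm 1]; exact ENNReal.mul_lt_mul_right hne hfin.ne hc1
    rw [one_mul] at this
    exact absurd hDle (not_le.mpr this)
  -- Step 3: conclude p sa = q sa.
  intro sa
  have hW0 : W1 (p sa) (q sa) = 0 :=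
    le_antisymm (hD0 ▸ le_iSup (fun sa => W1 (p sa) (q sa)) sa) zero_le
  have := hpprob sa
  have := hqprob sa
  refine eq_of_couplings fun ε hε => ?_
  obtain ⟨Γ, _, hΓprob, hΓcpl, hΓcost⟩ := hcpl ε hε
  exact ⟨Γ sa, hΓcpl sa, by simpa [hW0] using hΓcost sa⟩
end
end

section
/- Fix t ∈ [0,1] and γ ∈ [0,1). Let m̄ : S×A → P(S) be a fixed point of B_t^π with finite first moments, and let m^{(0)} : S×A → P(S) have finite first moments with C := sup_{s,a} W₁(m^{(0)}(·|s,a), m̄(·|s,a)) < ∞; define iterates m^{(n+1)} := B_t^π m^{(n)}. Assume that for every n and every ε > 0 there exists a jointly measurable family of couplings of m^{(n)}(·|s,a) and m̄(·|s,a) whose expected transport cost is within ε of W₁(m^{(n)}(·|s,a), m̄(·|s,a)) for all (s,a). Then for every n ≥ 0, sup_{s,a} W₁(m^{(n)}(·|s,a), m̄(·|s,a)) ≤ γⁿ · C; in particular the iterates of the probability-path Bellman operator converge to the fixed point in the supremum 1-Wasserstein distance. -/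
open MeasureTheory
open scoped ENNReal NNReal

noncomputable section

namespace BellmanAux

open MeasureTheory Measure

variable {α β : Type*} [MeasurableSpace α] [MeasurableSpace β]

lemma map_bind' (μ : Measure α) {κ : α → Measure β} (hκ : Measurable κ)
    {γ' : Type*} [MeasurableSpace γ'] {f : β → γ'} (hf : Measurable f) :
    (μ.bind κ).map f = μ.bind fun a => (κ a).map f := by
  have hm : Measurable fun a => (κ a).map f := (Measure.measurable_map f hf).comp hκ
  ext s hs
  rw [Measure.map_apply hf hs, Measure.bind_apply (hf hs) hκ.aemeasurable, Measure.bind_apply hs hm.aemeasurable]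
  refine lintegral_congr fun a => ?_
  rw [Measure.map_apply hf hs]

lemma isProbabilityMeasure_bind (μ : Measure α) [IsProbabilityMeasure μ]
    {κ : α → Measure β} (hκ : Measurable κ) (h : ∀ a, IsProbabilityMeasure (κ a)) :
    IsProbabilityMeasure (μ.bind κ) := by
  constructor
  rw [Measure.bind_apply MeasurableSet.univ hκ.aemeasurable]
  simp [measure_univ]

end BellmanAux

open BellmanAux

/-- Contraction step. -/
lemma bellman_contraction_step {d : ℕ} {𝒜 : Type*} [MeasurableSpace 𝒜]
    (γ : ℝ) (hγ0 : 0 ≤ γ) (hγ1 : γ < 1)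
    (P : St d × 𝒜 → Measure (St d))
    (hPprob : ∀ sa, IsProbabilityMeasure (P sa))
    (π : St d → 𝒜) (hπ : Measurable π)
    (κ : St d → Measure (St d)) (hκmeas : Measurable κ)
    (hκprob : ∀ x, IsProbabilityMeasure (κ x))
    (mbar : St d × 𝒜 → Measure (St d)) (hmbarmeas : Measurable mbar)
    (hfix : ∀ sa, Bpath γ P π κ mbar sa = mbar sa)
    (mn : St d × 𝒜 → Measure (St d)) (hmnmeas : Measurable mn)
    (hcpl : ∀ ε : ℝ≥0∞, 0 < ε → ∃ Γ : St d × 𝒜 → Measure (St d × St d),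
      Measurable Γ ∧ (∀ sa, IsProbabilityMeasure (Γ sa)) ∧
      (∀ sa, IsCoupling (Γ sa) (mn sa) (mbar sa)) ∧
      ∀ sa, (∫⁻ pr, edist pr.1 pr.2 ∂Γ sa) ≤ W1 (mn sa) (mbar sa) + ε) :
    (⨆ sa : St d × 𝒜, W1 (Bpath γ P π κ mn sa) (mbar sa)) ≤
      ENNReal.ofReal γ * ⨆ sa : St d × 𝒜, W1 (mn sa) (mbar sa) := by
  set S : ℝ≥0∞ := ⨆ sa : St d × 𝒜, W1 (mn sa) (mbar sa) with hS
  refine iSup_le fun sa => ?_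
  refine ENNReal.le_of_forall_pos_le_add fun ε hε _ => ?_
  obtain ⟨Γ, hΓmeas, hΓprob, hΓcpl, hΓcost⟩ := hcpl (ε : ℝ≥0∞) (by exact_mod_cast hε)
  -- the kernel s' ↦ Γ (s', π s')
  have hker : Measurable fun s' : St d => Γ (s', π s') :=
    hΓmeas.comp (measurable_id.prodMk hπ)
  have hdiag : Measurable fun x : St d => (x, x) := measurable_id.prodMk measurable_id
  haveI := hPprob sa
  -- the coupling of `Bpath γ P π κ mn sa` and `mbar sa`
  set D : Measure (St d × St d) := (Pt P κ sa).map (fun x => (x, x)) with hD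
  set B : Measure (St d × St d) := (P sa).bind (fun s' => Γ (s', π s')) with hB
  set Γ' : Measure (St d × St d) := ENNReal.ofReal (1 - γ) • D + ENNReal.ofReal γ • B with hΓ'
  haveI hPtprob : IsProbabilityMeasure (Pt P κ sa) :=
    isProbabilityMeasure_bind _ hκmeas hκprob
  haveI hDprob : IsProbabilityMeasure D := Measure.isProbabilityMeasure_map hdiag.aemeasurable
  haveI hBprob : IsProbabilityMeasure B :=
    isProbabilityMeasure_bind _ hker fun s' => hΓprob _
  have hsum : ENNReal.ofReal (1 - γ) + ENNReal.ofReal γ = 1 := by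
    rw [← ENNReal.ofReal_add (by linarith) hγ0]
    norm_num
  haveI hΓ'prob : IsProbabilityMeasure Γ' := by
    constructor
    simp only [hΓ', Measure.add_apply, Measure.smul_apply, smul_eq_mul, measure_univ, mul_one]
    exact hsum
  -- marginals
  have hmapD1 : D.map Prod.fst = Pt P κ sa := by
    rw [hD, Measure.map_map measurable_fst hdiag]; exact Measure.map_id
  have hmapD2 : D.map Prod.snd = Pt P κ sa := by
    rw [hD, Measure.map_map measurable_snd hdiag]; exact Measure.map_id
  have hmapB1 : B.map Prod.fst = Ppi P π mn sa := by
    rw [hB, map_bind' _ hker measurable_fst]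
    exact congrArg _ (funext fun s' => (hΓcpl (s', π s')).1)
  have hmapB2 : B.map Prod.snd = Ppi P π mbar sa := by
    rw [hB, map_bind' _ hker measurable_snd]
    exact congrArg _ (funext fun s' => (hΓcpl (s', π s')).2)
  have hcoupling : IsCoupling Γ' (Bpath γ P π κ mn sa) (mbar sa) := by
    constructor
    · rw [hΓ', Measure.map_add _ _ measurable_fst, Measure.map_smul, Measure.map_smul,
        hmapD1, hmapB1]
      rfl
    · rw [hΓ', Measure.map_add _ _ measurable_snd, Measure.map_smul, Measure.map_smul,
        hmapD2, hmapB2, ← hfix sa]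
      rfl
  -- cost
  have hedist : Measurable fun pr : St d × St d => edist pr.1 pr.2 :=
    measurable_fst.edist measurable_snd
  have hcostD : (∫⁻ pr, edist pr.1 pr.2 ∂D) = 0 := by
    rw [hD, lintegral_map hedist hdiag]
    simp
  have hcostB : (∫⁻ pr, edist pr.1 pr.2 ∂B) ≤ S + ε := by
    rw [hB, Measure.lintegral_bind hker.aemeasurable hedist.aemeasurable]
    calc ∫⁻ s', ∫⁻ pr, edist pr.1 pr.2 ∂Γ (s', π s') ∂P sa
        ≤ ∫⁻ _, S + ε ∂P sa := by
          refine lintegral_mono fun s' => ?_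
          refine (hΓcost (s', π s')).trans (add_le_add ?_ le_rfl)
          exact le_iSup (fun sa => W1 (mn sa) (mbar sa)) (s', π s')
      _ = S + ε := by simp [measure_univ]
  have hcost : (∫⁻ pr, edist pr.1 pr.2 ∂Γ') ≤ ENNReal.ofReal γ * S + ε := by
    rw [hΓ', lintegral_add_measure, lintegral_smul_measure, lintegral_smul_measure,
      hcostD, smul_zero, smul_eq_mul, zero_add]
    calc ENNReal.ofReal γ * ∫⁻ pr, edist pr.1 pr.2 ∂B
        ≤ ENNReal.ofReal γ * (S + ε) := mul_le_mul_right hcostB _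
      _ = ENNReal.ofReal γ * S + ENNReal.ofReal γ * ε := mul_add _ _ _
      _ ≤ ENNReal.ofReal γ * S + ε := by
          refine add_le_add_right (mul_le_of_le_one_left' ?_) _
          exact ENNReal.ofReal_le_one.mpr hγ1.le
  refine le_trans ?_ hcost
  exact iInf_le_of_le Γ' (iInf_le_of_le hΓ'prob (iInf_le_of_le hcoupling le_rfl))

/-- The iterates of the probability-path Bellman operator converge to its
fixed point geometrically fast in the supremum `1`-Wasserstein distance. -/
theorem bellman_path_iterates_converge {d : ℕ} {𝒜 : Type*} [MeasurableSpace 𝒜]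
    (t : ℝ) (ht : t ∈ Set.Icc (0 : ℝ) 1)
    (γ : ℝ) (hγ0 : 0 ≤ γ) (hγ1 : γ < 1)
    (P : St d × 𝒜 → Measure (St d)) (hPmeas : Measurable P)
    (hPprob : ∀ sa, IsProbabilityMeasure (P sa))
    (π : St d → 𝒜) (hπ : Measurable π)
    (κ : St d → Measure (St d)) (hκmeas : Measurable κ)
    (hκprob : ∀ x, IsProbabilityMeasure (κ x))
    -- the fixed point
    (mbar : St d × 𝒜 → Measure (St d)) (hmbarmeas : Measurable mbar)
    (hmbarprob : ∀ sa, IsProbabilityMeasure (mbar sa))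
    (hmbarmom : ∀ sa, (∫⁻ x, (‖x‖₊ : ℝ≥0∞) ∂mbar sa) < ⊤)
    (hfix : ∀ sa, Bpath γ P π κ mbar sa = mbar sa)
    -- the iterates
    (m : ℕ → St d × 𝒜 → Measure (St d)) (hmmeas : ∀ n, Measurable (m n))
    (hmprob : ∀ n sa, IsProbabilityMeasure (m n sa))
    (hmmom : ∀ n sa, (∫⁻ x, (‖x‖₊ : ℝ≥0∞) ∂m n sa) < ⊤)
    (hiter : ∀ n sa, m (n + 1) sa = Bpath γ P π κ (m n) sa)
    -- finite initial distance
    (hC : (⨆ sa : St d × 𝒜, W1 (m 0 sa) (mbar sa)) < ⊤)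
    -- jointly measurable families of ε-optimal couplings at every iteration
    (hcpl : ∀ n : ℕ, ∀ ε : ℝ≥0∞, 0 < ε → ∃ Γ : St d × 𝒜 → Measure (St d × St d),
      Measurable Γ ∧ (∀ sa, IsProbabilityMeasure (Γ sa)) ∧
      (∀ sa, IsCoupling (Γ sa) (m n sa) (mbar sa)) ∧
      ∀ sa, (∫⁻ pr, edist pr.1 pr.2 ∂Γ sa) ≤ W1 (m n sa) (mbar sa) + ε) :
    ∀ n : ℕ, (⨆ sa : St d × 𝒜, W1 (m n sa) (mbar sa)) ≤
      ENNReal.ofReal γ ^ n * ⨆ sa : St d × 𝒜, W1 (m 0 sa) (mbar sa) := by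
  intro n
  induction n with
  | zero => simpa using le_rfl
  | succ n ih =>
    have hrw : (⨆ sa : St d × 𝒜, W1 (m (n + 1) sa) (mbar sa)) =
        ⨆ sa : St d × 𝒜, W1 (Bpath γ P π κ (m n) sa) (mbar sa) := by
      refine iSup_congr fun sa => ?_
      rw [hiter n sa]
    have step := bellman_contraction_step γ hγ0 hγ1 P hPprob π hπ κ hκmeas hκprob
      mbar hmbarmeas hfix (m n) (hmmeas n) (hcpl n)
    calc (⨆ sa : St d × 𝒜, W1 (m (n + 1) sa) (mbar sa))
        ≤ ENNReal.ofReal γ * ⨆ sa : St d × 𝒜, W1 (m n sa) (mbar sa) := hrw ▸ step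
      _ ≤ ENNReal.ofReal γ * (ENNReal.ofReal γ ^ n * ⨆ sa : St d × 𝒜, W1 (m 0 sa) (mbar sa)) :=
          mul_le_mul_right ih _
      _ = ENNReal.ofReal γ ^ (n + 1) * ⨆ sa : St d × 𝒜, W1 (m 0 sa) (mbar sa) := by
          rw [pow_succ, ← mul_assoc, mul_comm (ENNReal.ofReal γ)]
end
end

section
/- Straight conditional paths: variance bound and equality under non-crossing interpolants. In the setting of the coupled variance comparison, specialize to straight conditional paths: X_t = T·X₁ + (1−T)·X₀ almost surely, and u(t,x,x₀,x₁) := x₁ − x₀. Assume moreover C := sup over (t,x,s,a) of the operator norm of J(t,x,s,a) is finite. Then: (i) Tr Cov(G_TDCFM(C)) ≤ Tr Cov(G_TD²) + γ²·C²·E‖ (X₁−X₀) − E[X₁−X₀ | T,S,A,S',X̂,X_t] ‖²; and (ii) if for almost every realization the conditional distribution of (X₀,X₁) given (T,S,A,S',X̂,X_t) is a Dirac measure (i.e., the linear interpolation paths do not intersect), then Tr Cov(G_TDCFM(C)) = Tr Cov(G_TD²). -/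
open MeasureTheory
open scoped ENNReal NNReal
open scoped InnerProductSpace

noncomputable section

section Aux

variable {Ω : Type*} {E : Type*} [NormedAddCommGroup E] [InnerProductSpace ℝ E]
  [CompleteSpace E]

/-- The conditional expectation of an L² function agrees a.e. with `condexpL2`. -/
lemma aux_condexp_ae_eq_condexpL2 {m m0 : MeasurableSpace Ω} (hle : m ≤ m0) (μ : Measure Ω)
    [IsFiniteMeasure μ] {f : Ω → E} (hf : MemLp f 2 μ) :
    μ[f|m] =ᵐ[μ] ((condExpL2 E ℝ hle (hf.toLp f) : Lp E 2 μ) : Ω → E) := by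
  haveI : IsFiniteMeasure (μ.trim hle) := isFiniteMeasure_trim hle
  refine (ae_eq_condExp_of_forall_setIntegral_eq hle (hf.integrable one_le_two)
    (fun s hs hμs => integrableOn_condExpL2_of_measure_ne_top (𝕜 := ℝ) hle hμs.ne _)
    (fun s hs hμs => ?_) (aestronglyMeasurable_condExpL2 (𝕜 := ℝ) hle _)).symm
  rw [integral_condExpL2_eq hle (hf.toLp f) hs hμs.ne]
  exact setIntegral_congr_ae (hle s hs) ((hf.coeFn_toLp).mono fun x hx _ => hx)

omit [CompleteSpace E] in
lemma aux_integrable_inner {m0 : MeasurableSpace Ω} {μ : Measure Ω} {f g : Ω → E}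
    (hf : MemLp f 2 μ) (hg : MemLp g 2 μ) :
    Integrable (fun ω => ⟪f ω, g ω⟫_ℝ) μ := by
  refine (L2.integrable_inner (𝕜 := ℝ) (hf.toLp f) (hg.toLp g)).congr ?_
  filter_upwards [hf.coeFn_toLp, hg.coeFn_toLp] with ω h1 h2
  rw [h1, h2]

lemma aux_memℒp_condexp_two {m m0 : MeasurableSpace Ω} (hle : m ≤ m0) (μ : Measure Ω)
    [IsFiniteMeasure μ] {f : Ω → E} (hf : MemLp f 2 μ) : MemLp (μ[f|m]) 2 μ :=
  (Lp.memLp ((condExpL2 E ℝ hle (hf.toLp f) : Lp E 2 μ))).ae_eq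
    (aux_condexp_ae_eq_condexpL2 hle μ hf).symm

/-- Orthogonality: for `W` m-measurable and L², `∫ ⟪W, f - E[f|m]⟫ = 0`. -/
lemma aux_integral_inner_sub_condexp {m m0 : MeasurableSpace Ω} (hle : m ≤ m0) (μ : Measure Ω)
    [IsFiniteMeasure μ] {W f : Ω → E} (hWm : AEStronglyMeasurable[m] W μ)
    (hW : MemLp W 2 μ) (hf : MemLp f 2 μ) :
    ∫ ω, ⟪W ω, f ω - (μ[f|m]) ω⟫_ℝ ∂μ = 0 := by
  have hb := aux_condexp_ae_eq_condexpL2 hle μ hf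
  set g : Lp E 2 μ := (condExpL2 E ℝ hle (hf.toLp f) : Lp E 2 μ) with hg
  have hWm' : AEStronglyMeasurable[m] (hW.toLp W : Ω → E) μ :=
    hWm.congr hW.coeFn_toLp.symm
  have hkey := inner_condExpL2_eq_inner_fun (𝕜 := ℝ) hle (hf.toLp f) (hW.toLp W) hWm'
  rw [L2.inner_def, L2.inner_def] at hkey
  have h2 : ∫ ω, ⟪W ω, (g : Ω → E) ω⟫_ℝ ∂μ = ∫ ω, ⟪W ω, f ω⟫_ℝ ∂μ := by
    calc ∫ ω, ⟪W ω, (g : Ω → E) ω⟫_ℝ ∂μ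
        = ∫ ω, ⟪(g : Ω → E) ω, (hW.toLp W : Ω → E) ω⟫_ℝ ∂μ := by
          refine integral_congr_ae ?_
          filter_upwards [hW.coeFn_toLp] with ω h1
          rw [h1, real_inner_comm]
      _ = ∫ ω, ⟪(hf.toLp f : Ω → E) ω, (hW.toLp W : Ω → E) ω⟫_ℝ ∂μ := hkey
      _ = ∫ ω, ⟪W ω, f ω⟫_ℝ ∂μ := by
          refine integral_congr_ae ?_
          filter_upwards [hW.coeFn_toLp, hf.coeFn_toLp] with ω h1 h3
          rw [h1, h3, real_inner_comm]
  have hsplit : ∫ ω, ⟪W ω, f ω - (μ[f|m]) ω⟫_ℝ ∂μ =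
      (∫ ω, ⟪W ω, f ω⟫_ℝ ∂μ) - ∫ ω, ⟪W ω, (μ[f|m]) ω⟫_ℝ ∂μ := by
    simp_rw [inner_sub_right]
    exact integral_sub (aux_integrable_inner hW hf)
      (aux_integrable_inner hW (aux_memℒp_condexp_two hle μ hf))
  have h3 : ∫ ω, ⟪W ω, (μ[f|m]) ω⟫_ℝ ∂μ = ∫ ω, ⟪W ω, (g : Ω → E) ω⟫_ℝ ∂μ := by
    refine integral_congr_ae ?_
    filter_upwards [hb] with ω h1
    rw [h1]
  rw [hsplit, h3, h2, sub_self]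

/-- Coordinates of the adjoint of a map between Euclidean spaces. -/
lemma aux_adjoint_apply_coord {d n : ℕ}
    (A : EuclideanSpace ℝ (Fin d) →L[ℝ] EuclideanSpace ℝ (Fin n))
    (y : EuclideanSpace ℝ (Fin n)) (j : Fin d) :
    (ContinuousLinearMap.adjoint A y) j = ⟪y, A (EuclideanSpace.single j 1)⟫_ℝ := by
  have h1 : (ContinuousLinearMap.adjoint A y) j
      = ⟪ContinuousLinearMap.adjoint A y, EuclideanSpace.single j 1⟫_ℝ := by
    rw [EuclideanSpace.inner_single_right]; simp
  rw [h1, ContinuousLinearMap.adjoint_inner_left]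

end Aux

/-- Straight conditional paths: the total variance of the coupled TD-CFM(C)
estimator is bounded by that of TD²-CFM plus `γ²C²` times the expected conditional variance of
`X₁ − X₀`; when the linear interpolation paths do not intersect (the conditional law of
`(X₀,X₁)` given the conditioning information is Dirac), the two total variances coincide. -/
theorem straight_paths_variance_bound_and_equality
    {d np : ℕ} {𝒜 : Type*} [MeasurableSpace 𝒜]
    {Ω : Type*} [MeasurableSpace Ω] (μ : Measure Ω) [IsProbabilityMeasure μ]
    (γ : ℝ) (hγ0 : 0 ≤ γ) (hγ1 : γ < 1)
    (ρ : Measure (St d × 𝒜)) (hρ : IsProbabilityMeasure ρ)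
    (P : St d × 𝒜 → Measure (St d)) (hPmeas : Measurable P)
    (hPprob : ∀ sa, IsProbabilityMeasure (P sa))
    (π : St d → 𝒜) (hπ : Measurable π)
    -- the conditional law of X̂ given (T, S, A, S')
    (κhat : ℝ → St d × 𝒜 × St d → Measure (St d))
    (hκhatmeas : Measurable fun q : ℝ × (St d × 𝒜 × St d) => κhat q.1 q.2)
    (hκhatprob : ∀ t z, IsProbabilityMeasure (κhat t z))
    -- the two-sided conditional probability-path kernel p_{t|0,1}
    (κ01 : ℝ → St d × St d → Measure (St d))
    (hκ01meas : Measurable fun q : ℝ × (St d × St d) => κ01 q.1 q.2)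
    (hκ01prob : ∀ t z, IsProbabilityMeasure (κ01 t z))
    -- the previous iterate's joint (noise, data) family
    (m01 : St d × 𝒜 → Measure (St d × St d)) (hm01meas : Measurable m01)
    (hm01prob : ∀ sa, IsProbabilityMeasure (m01 sa))
    -- the random variables
    (T : Ω → ℝ) (S : Ω → St d) (Aa : Ω → 𝒜) (S' : Ω → St d)
    (Xhat X0 X1 Xt : Ω → St d)
    (hT : Measurable T) (hS : Measurable S) (hA : Measurable Aa) (hS' : Measurable S')
    (hXhat : Measurable Xhat) (hX0 : Measurable X0) (hX1 : Measurable X1)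
    (hXt : Measurable Xt)
    -- the joint law: T uniform and independent; (S,A) ~ ρ; S' ~ P(·|S,A);
    -- (X₀,X₁) ~ m_{0,1}(·|S',π(S')) and X̂ conditionally independent given (T,S,A,S');
    -- X_t ~ p_{T|0,1}(·|X₀,X₁)
    (hlaw : μ.map (fun ω => (T ω, S ω, Aa ω, S' ω, Xhat ω, X0 ω, X1 ω, Xt ω)) =
      (volume.restrict (Set.Icc (0 : ℝ) 1)).bind fun t =>
        ρ.bind fun sa =>
          (P sa).bind fun s' =>
            ((κhat t (sa.1, sa.2, s')).prod (m01 (s', π s'))).bind fun q =>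
              (κ01 t q.2).map fun xt =>
                (t, sa.1, sa.2, s', q.1, q.2.1, q.2.2, xt))
    -- the one-step conditional field u⁰, the two-sided conditional field u_t(x|x₀,x₁),
    -- the parameterized field v, and ∇_θ v
    (u0 : ℝ → St d → St d → St d)
    (hu0 : Measurable fun q : ℝ × St d × St d => u0 q.1 q.2.1 q.2.2)
    (u : ℝ → St d → St d → St d → St d)
    (hu : Measurable fun q : ℝ × St d × St d × St d => u q.1 q.2.1 q.2.2.1 q.2.2.2)
    (v : ℝ → St d → St d × 𝒜 → St d)
    (hv : Measurable fun q : ℝ × St d × (St d × 𝒜) => v q.1 q.2.1 q.2.2)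
    (J : ℝ → St d → St d × 𝒜 → (St d →L[ℝ] EuclideanSpace ℝ (Fin np)))
    (hJ : Measurable fun q : (ℝ × St d × (St d × 𝒜)) × St d =>
      J q.1.1 q.1.2.1 q.1.2.2 q.2)
    -- the conditioning σ-algebra 𝔉 = σ(T,S,A,S',X̂,X_t)
    (𝔉 : MeasurableSpace Ω)
    (h𝔉 : 𝔉 = MeasurableSpace.comap
      (fun ω => (T ω, S ω, Aa ω, S' ω, Xhat ω, Xt ω)) inferInstance)
    -- the bootstrapped marginal field: h(T,S',X_t) is a version of E[u(T,X_t,X₀,X₁)|𝔉]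
    (h : ℝ → St d → St d → St d)
    (hmeas : Measurable fun q : ℝ × St d × St d => h q.1 q.2.1 q.2.2)
    (hh : (fun ω => h (T ω) (S' ω) (Xt ω)) =ᵐ[μ]
      μ[(fun ω => u (T ω) (Xt ω) (X0 ω) (X1 ω)) | 𝔉])
    -- the common one-step term, the two estimators, and the bootstrapped random vector Y
    (A0 : Ω → EuclideanSpace ℝ (Fin np))
    (hA0 : A0 = fun ω =>
      (1 - γ) • (J (T ω) (Xhat ω) (S ω, Aa ω))
        (v (T ω) (Xhat ω) (S ω, Aa ω) - u0 (T ω) (Xhat ω) (S' ω)))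
    (G2 GC Y : Ω → EuclideanSpace ℝ (Fin np))
    (hG2 : G2 = fun ω => A0 ω +
      γ • (J (T ω) (Xt ω) (S ω, Aa ω))
        (v (T ω) (Xt ω) (S ω, Aa ω) - h (T ω) (S' ω) (Xt ω)))
    (hGC : GC = fun ω => A0 ω +
      γ • (J (T ω) (Xt ω) (S ω, Aa ω))
        (v (T ω) (Xt ω) (S ω, Aa ω) - u (T ω) (Xt ω) (X0 ω) (X1 ω)))
    (hY : Y = fun ω => (J (T ω) (Xt ω) (S ω, Aa ω)) (u (T ω) (Xt ω) (X0 ω) (X1 ω)))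
    -- square-integrability
    (hG2L2 : MemLp G2 2 μ) (hGCL2 : MemLp GC 2 μ) (hYL2 : MemLp Y 2 μ)
    (hXL2 : MemLp (fun ω => X1 ω - X0 ω) 2 μ)
    -- straight conditional paths: X_t = T•X₁ + (1−T)•X₀ and u_t(x|x₀,x₁) = x₁ − x₀
    (hstraight : ∀ᵐ ω ∂μ, Xt ω = T ω • X1 ω + (1 - T ω) • X0 ω)
    (hustraight : ∀ t x x₀ x₁, u t x x₀ x₁ = x₁ - x₀)
    -- uniform bound on the operator norm of ∇_θ v
    (C : ℝ) (hC : ∀ t x sa, ‖J t x sa‖ ≤ C) :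
    -- (i) variance bound
    (∫ ω, ‖GC ω - ∫ ω', GC ω' ∂μ‖ ^ 2 ∂μ) ≤
      (∫ ω, ‖G2 ω - ∫ ω', G2 ω' ∂μ‖ ^ 2 ∂μ) +
        γ ^ 2 * C ^ 2 *
          ∫ ω, ‖(X1 ω - X0 ω) -
            (μ[(fun ω' => X1 ω' - X0 ω') | 𝔉]) ω‖ ^ 2 ∂μ ∧
    -- (ii) if the conditional distribution of (X₀,X₁) given 𝔉 is a.e. a Dirac measure
    -- (the linear interpolants do not intersect), the total variances coincide
    ((∃ g : ℝ × St d × 𝒜 × St d × St d × St d → St d × St d, Measurable g ∧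
        (fun ω => (X0 ω, X1 ω)) =ᵐ[μ]
          fun ω => g (T ω, S ω, Aa ω, S' ω, Xhat ω, Xt ω)) →
      (∫ ω, ‖GC ω - ∫ ω', GC ω' ∂μ‖ ^ 2 ∂μ) =
        (∫ ω, ‖G2 ω - ∫ ω', G2 ω' ∂μ‖ ^ 2 ∂μ)) := by

  classical
  rename_i mA mΩ pμ
  -- Setup: the conditioning map and σ-algebra
  set Z : Ω → ℝ × St d × 𝒜 × St d × St d × St d :=
    fun ω => (T ω, S ω, Aa ω, S' ω, Xhat ω, Xt ω) with hZdef
  have hZ : Measurable[mΩ] Z :=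
    hT.prodMk (hS.prodMk (hA.prodMk (hS'.prodMk (hXhat.prodMk hXt))))
  have hle : 𝔉 ≤ mΩ := by
    rw [h𝔉]; exact measurable_iff_comap_le.mp hZ
  haveI : IsFiniteMeasure (μ.trim hle) := isFiniteMeasure_trim hle
  have hZF : Measurable[𝔉] Z := by
    rw [h𝔉]; exact measurable_iff_comap_le.mpr le_rfl
  have hTF : Measurable[𝔉] T := measurable_fst.comp hZF
  have hSF : Measurable[𝔉] S := measurable_fst.comp (measurable_snd.comp hZF)
  have hAF : Measurable[𝔉] Aa :=
    measurable_fst.comp (measurable_snd.comp (measurable_snd.comp hZF))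
  have hS'F : Measurable[𝔉] S' :=
    measurable_fst.comp (measurable_snd.comp (measurable_snd.comp (measurable_snd.comp hZF)))
  have hXhatF : Measurable[𝔉] Xhat :=
    measurable_fst.comp (measurable_snd.comp (measurable_snd.comp (measurable_snd.comp
      (measurable_snd.comp hZF))))
  have hXtF : Measurable[𝔉] Xt :=
    measurable_snd.comp (measurable_snd.comp (measurable_snd.comp (measurable_snd.comp
      (measurable_snd.comp hZF))))
  -- the conditional expectation of X₁ - X₀
  set e : Ω → St d := μ[(fun ω' => X1 ω' - X0 ω')|𝔉] with hedef
  have hE2 : MemLp e 2 μ := aux_memℒp_condexp_two hle μ hXL2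
  have hhe : (fun ω => h (T ω) (S' ω) (Xt ω)) =ᵐ[μ] e := by
    have hufun : (fun ω => u (T ω) (Xt ω) (X0 ω) (X1 ω)) = fun ω => X1 ω - X0 ω := by
      funext ω; rw [hustraight]
    rw [hufun] at hh
    exact hh
  -- the difference of the two estimators
  set D : Ω → EuclideanSpace ℝ (Fin np) := fun ω =>
    γ • (J (T ω) (Xt ω) (S ω, Aa ω)) (h (T ω) (S' ω) (Xt ω) - (X1 ω - X0 ω)) with hDdef
  have hGCsplit : GC = fun ω => G2 ω + D ω := by
    funext ω
    rw [hGC, hG2, hDdef]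
    simp only [hustraight, map_sub, smul_sub]
    abel
  have hDL2 : MemLp D 2 μ := by
    have hDeq : D = fun ω => GC ω - G2 ω := by
      funext ω; simp only [hGCsplit]; rw [add_sub_cancel_left]
    rw [hDeq]; exact hGCL2.sub hG2L2
  have hintD : Integrable D μ := hDL2.integrable one_le_two
  have hintG2 : Integrable G2 μ := hG2L2.integrable one_le_two
  -- measurability w.r.t. 𝔉
  have hJt : ∀ {x : Ω → St d}, Measurable[𝔉] x →
      Measurable[𝔉] (fun ω => (J (T ω) (Xt ω) (S ω, Aa ω)) (x ω)) := fun hx =>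
    hJ.comp ((hTF.prodMk (hXtF.prodMk (hSF.prodMk hAF))).prodMk hx)
  have hJhat : ∀ {x : Ω → St d}, Measurable[𝔉] x →
      Measurable[𝔉] (fun ω => (J (T ω) (Xhat ω) (S ω, Aa ω)) (x ω)) := fun hx =>
    hJ.comp ((hTF.prodMk (hXhatF.prodMk (hSF.prodMk hAF))).prodMk hx)
  have hvt : Measurable[𝔉] (fun ω => v (T ω) (Xt ω) (S ω, Aa ω)) :=
    hv.comp (hTF.prodMk (hXtF.prodMk (hSF.prodMk hAF)))
  have hvhat : Measurable[𝔉] (fun ω => v (T ω) (Xhat ω) (S ω, Aa ω)) :=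
    hv.comp (hTF.prodMk (hXhatF.prodMk (hSF.prodMk hAF)))
  have hu0app : Measurable[𝔉] (fun ω => u0 (T ω) (Xhat ω) (S' ω)) :=
    hu0.comp (hTF.prodMk (hXhatF.prodMk hS'F))
  have hhapp : Measurable[𝔉] (fun ω => h (T ω) (S' ω) (Xt ω)) :=
    hmeas.comp (hTF.prodMk (hS'F.prodMk hXtF))
  have hG2m : Measurable[𝔉] G2 := by
    rw [hG2, hA0]
    exact ((hJhat (hvhat.sub hu0app)).const_smul (1 - γ)).add
      ((hJt (hvt.sub hhapp)).const_smul γ)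
  -- C is nonnegative
  have hC0 : 0 ≤ C := by
    have hne : Nonempty (St d × 𝒜) := by
      by_contra hcon
      rw [not_nonempty_iff] at hcon
      have h1 : ρ Set.univ = 1 := measure_univ
      rw [Set.univ_eq_empty_iff.mpr hcon, measure_empty] at h1
      exact zero_ne_one h1
    obtain ⟨sa⟩ := hne
    exact le_trans (norm_nonneg (J 0 0 sa)) (hC 0 0 sa)
  -- key orthogonality: 𝔉-measurable L² vectors are orthogonal to D
  have cross : ∀ (W : Ω → EuclideanSpace ℝ (Fin np)), Measurable[𝔉] W → MemLp W 2 μ →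
      ∫ ω, ⟪W ω, D ω⟫_ℝ ∂μ = 0 := by
    intro W hWm hW2
    set W' : Ω → St d := fun ω =>
      γ • (ContinuousLinearMap.adjoint (J (T ω) (Xt ω) (S ω, Aa ω))) (W ω) with hW'def
    have hW'm : Measurable[𝔉] W' := by
      refine (WithLp.measurable_toLp 2 (Fin d → ℝ)).comp (f := fun ω => WithLp.ofLp (W' ω)) ?_
      apply measurable_pi_iff.mpr
      intro j
      change Measurable fun ω => W' ω j
      have hco : (fun ω => W' ω j) =
          fun ω => γ * ⟪W ω, (J (T ω) (Xt ω) (S ω, Aa ω)) (EuclideanSpace.single j 1)⟫_ℝ := by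
        funext ω
        simp only [hW'def, PiLp.smul_apply, smul_eq_mul]
        rw [aux_adjoint_apply_coord]
      rw [hco]
      exact (hWm.inner (hJt measurable_const)).const_mul γ
    have hW'sm : AEStronglyMeasurable[𝔉] W' μ :=
      hW'm.stronglyMeasurable.aestronglyMeasurable
    have hW'2 : MemLp W' 2 μ := by
      refine hW2.of_le_mul (c := γ * C) ((hW'm.mono hle le_rfl).aestronglyMeasurable) ?_
      refine Filter.Eventually.of_forall fun ω => ?_
      have h1 : ‖(ContinuousLinearMap.adjoint (J (T ω) (Xt ω) (S ω, Aa ω))) (W ω)‖ ≤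
          C * ‖W ω‖ := by
        refine le_trans (ContinuousLinearMap.le_opNorm _ _) ?_
        have h2 : ‖ContinuousLinearMap.adjoint (J (T ω) (Xt ω) (S ω, Aa ω))‖ =
            ‖J (T ω) (Xt ω) (S ω, Aa ω)‖ := LinearIsometryEquiv.norm_map _ _
        rw [h2]
        exact mul_le_mul_of_nonneg_right (hC _ _ _) (norm_nonneg _)
      calc ‖W' ω‖ = γ * ‖(ContinuousLinearMap.adjoint (J (T ω) (Xt ω) (S ω, Aa ω))) (W ω)‖ := by
            simp only [hW'def]
            rw [norm_smul, Real.norm_eq_abs, abs_of_nonneg hγ0]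
        _ ≤ γ * (C * ‖W ω‖) := mul_le_mul_of_nonneg_left h1 hγ0
        _ = γ * C * ‖W ω‖ := (mul_assoc _ _ _).symm
    have hpt : ∀ ω, ⟪W ω, D ω⟫_ℝ = ⟪W' ω, h (T ω) (S' ω) (Xt ω) - (X1 ω - X0 ω)⟫_ℝ := by
      intro ω
      simp only [hDdef, hW'def, real_inner_smul_right, real_inner_smul_left,
        ContinuousLinearMap.adjoint_inner_left]
    calc ∫ ω, ⟪W ω, D ω⟫_ℝ ∂μ
        = ∫ ω, -⟪W' ω, (X1 ω - X0 ω) - e ω⟫_ℝ ∂μ := by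
          refine integral_congr_ae ?_
          filter_upwards [hhe] with ω hω
          show ⟪W ω, D ω⟫_ℝ = -⟪W' ω, (X1 ω - X0 ω) - e ω⟫_ℝ
          rw [hpt ω, show h (T ω) (S' ω) (Xt ω) = e ω from hω, ← inner_neg_right, neg_sub]
      _ = -∫ ω, ⟪W' ω, (X1 ω - X0 ω) - e ω⟫_ℝ ∂μ := integral_neg _
      _ = -0 := by
          rw [hedef]
          exact congrArg Neg.neg (aux_integral_inner_sub_condexp hle μ hW'sm hW'2 hXL2)
      _ = 0 := neg_zero
  -- the mean of D vanishes
  have hDzero : ∫ ω, D ω ∂μ = 0 := by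
    have h1 : ⟪∫ ω, D ω ∂μ, ∫ ω, D ω ∂μ⟫_ℝ = 0 := by
      rw [← integral_inner hintD]
      exact cross _ measurable_const (memLp_const _)
    exact inner_self_eq_zero.mp h1
  have hmeans : ∫ ω', GC ω' ∂μ = ∫ ω', G2 ω' ∂μ := by
    simp only [hGCsplit]
    rw [integral_add hintG2 hintD, hDzero, add_zero]
  -- integrability of the square norms
  have hDint2 : Integrable (fun ω => ‖D ω‖^2) μ := by
    have h1 := aux_integrable_inner hDL2 hDL2
    simpa only [real_inner_self_eq_norm_sq] using h1
  -- the main variance identity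
  have hident : ∫ ω, ‖GC ω - ∫ ω', GC ω' ∂μ‖^2 ∂μ
      = (∫ ω, ‖G2 ω - ∫ ω', G2 ω' ∂μ‖^2 ∂μ) + ∫ ω, ‖D ω‖^2 ∂μ := by
    have hF2 : MemLp (fun ω => G2 ω - ∫ ω', G2 ω' ∂μ) 2 μ := hG2L2.sub (memLp_const _)
    have hFm : Measurable[𝔉] (fun ω => G2 ω - ∫ ω', G2 ω' ∂μ) := hG2m.sub measurable_const
    have hFint : Integrable (fun ω => ‖G2 ω - ∫ ω', G2 ω' ∂μ‖^2) μ := by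
      have h1 := aux_integrable_inner hF2 hF2
      simpa only [real_inner_self_eq_norm_sq] using h1
    have hFD : Integrable (fun ω => ⟪G2 ω - ∫ ω', G2 ω' ∂μ, D ω⟫_ℝ) μ :=
      aux_integrable_inner hF2 hDL2
    have hstep : ∫ ω, ‖GC ω - ∫ ω', GC ω' ∂μ‖^2 ∂μ =
        ∫ ω, (‖G2 ω - ∫ ω', G2 ω' ∂μ‖^2
          + 2 * ⟪G2 ω - ∫ ω', G2 ω' ∂μ, D ω⟫_ℝ + ‖D ω‖^2) ∂μ := by
      refine integral_congr_ae (Filter.Eventually.of_forall fun ω => ?_)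
      have hω : GC ω - ∫ ω', GC ω' ∂μ = (G2 ω - ∫ ω', G2 ω' ∂μ) + D ω := by
        rw [hmeans]
        simp only [hGCsplit]
        abel
      show ‖GC ω - ∫ ω', GC ω' ∂μ‖^2 = _
      rw [hω, norm_add_sq_real]
    have hFsum : Integrable (fun ω => ‖G2 ω - ∫ ω', G2 ω' ∂μ‖^2
        + 2 * ⟪G2 ω - ∫ ω', G2 ω' ∂μ, D ω⟫_ℝ) μ := hFint.add (hFD.const_mul 2)
    rw [hstep, integral_add hFsum hDint2, integral_add hFint (hFD.const_mul 2),
      integral_const_mul, cross _ hFm hF2, mul_zero, add_zero]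
  -- the variance bound for D
  have hbound : ∫ ω, ‖D ω‖^2 ∂μ ≤
      γ^2 * C^2 * ∫ ω, ‖(X1 ω - X0 ω) - e ω‖^2 ∂μ := by
    have hUE2 : MemLp (fun ω => (X1 ω - X0 ω) - e ω) 2 μ := hXL2.sub hE2
    have hInt2 : Integrable (fun ω => ‖(X1 ω - X0 ω) - e ω‖^2) μ := by
      have h1 := aux_integrable_inner hUE2 hUE2
      simpa only [real_inner_self_eq_norm_sq] using h1
    have hae : ∀ᵐ ω ∂μ, ‖D ω‖^2 ≤ γ^2 * C^2 * ‖(X1 ω - X0 ω) - e ω‖^2 := by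
      filter_upwards [hhe] with ω hω
      have h1 : ‖D ω‖ ≤ γ * C * ‖(X1 ω - X0 ω) - e ω‖ := by
        simp only [hDdef]
        rw [show h (T ω) (S' ω) (Xt ω) = e ω from hω]
        rw [norm_smul, Real.norm_eq_abs, abs_of_nonneg hγ0]
        have h2 : ‖(J (T ω) (Xt ω) (S ω, Aa ω)) (e ω - (X1 ω - X0 ω))‖ ≤
            C * ‖(X1 ω - X0 ω) - e ω‖ := by
          refine le_trans (ContinuousLinearMap.le_opNorm _ _) ?_
          rw [norm_sub_rev]
          exact mul_le_mul_of_nonneg_right (hC _ _ _) (norm_nonneg _)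
        calc γ * ‖(J (T ω) (Xt ω) (S ω, Aa ω)) (e ω - (X1 ω - X0 ω))‖
            ≤ γ * (C * ‖(X1 ω - X0 ω) - e ω‖) := mul_le_mul_of_nonneg_left h2 hγ0
          _ = γ * C * ‖(X1 ω - X0 ω) - e ω‖ := (mul_assoc _ _ _).symm
      calc ‖D ω‖^2 ≤ (γ * C * ‖(X1 ω - X0 ω) - e ω‖)^2 :=
            pow_le_pow_left₀ (norm_nonneg _) h1 2
        _ = γ^2 * C^2 * ‖(X1 ω - X0 ω) - e ω‖^2 := by ring
    calc ∫ ω, ‖D ω‖^2 ∂μ ≤ ∫ ω, γ^2 * C^2 * ‖(X1 ω - X0 ω) - e ω‖^2 ∂μ :=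
          integral_mono_ae hDint2 (hInt2.const_mul _) hae
      _ = γ^2 * C^2 * ∫ ω, ‖(X1 ω - X0 ω) - e ω‖^2 ∂μ := integral_const_mul _ _
  constructor
  · rw [hident]
    exact add_le_add_right hbound _
  · rintro ⟨g, hgmeas, hgae⟩
    have hgz : (fun ω => (X0 ω, X1 ω)) =ᵐ[μ] fun ω => g (Z ω) := hgae
    have hφm : Measurable[𝔉] (fun ω => (g (Z ω)).2 - (g (Z ω)).1) :=
      (measurable_snd.comp (hgmeas.comp hZF)).sub (measurable_fst.comp (hgmeas.comp hZF))
    have huoφ : (fun ω => X1 ω - X0 ω) =ᵐ[μ] fun ω => (g (Z ω)).2 - (g (Z ω)).1 := by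
      filter_upwards [hgz] with ω hω
      rw [← hω]
    have h4 : μ[(fun ω => (g (Z ω)).2 - (g (Z ω)).1)|𝔉]
        = fun ω => (g (Z ω)).2 - (g (Z ω)).1 :=
      condExp_of_stronglyMeasurable hle hφm.stronglyMeasurable
        ((hXL2.integrable one_le_two).congr huoφ)
    have hcond : e =ᵐ[μ] fun ω => X1 ω - X0 ω := by
      rw [hedef]
      refine (condExp_congr_ae huoφ).trans ?_
      rw [h4]
      exact huoφ.symm
    have hD0 : ∀ᵐ ω ∂μ, D ω = 0 := by
      filter_upwards [hhe, hcond] with ω h1 h2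
      simp only [hDdef]
      rw [show h (T ω) (S' ω) (Xt ω) = e ω from h1,
        show e ω = X1 ω - X0 ω from h2, sub_self, map_zero, smul_zero]
    have hDzero2 : ∫ ω, ‖D ω‖^2 ∂μ = 0 := by
      have h5 : (fun ω => ‖D ω‖^2) =ᵐ[μ] fun _ => (0 : ℝ) := by
        filter_upwards [hD0] with ω hω
        simp [hω]
      rw [integral_congr_ae h5, integral_zero]
    rw [hident, hDzero2, add_zero]
end
end

section
/- Let γ ∈ [0,1] and let v¹_t and v²_t be time-dependent C¹ vector fields on ℝ^d that generate (via the continuity equation) time-dependent C¹ probability density paths p¹_t and p²_t, respectively. Assume (1−γ)p¹_t(x) + γp²_t(x) > 0 for all (t,x). Then the vector field v_t(x) := ((1−γ)p¹_t(x)v¹_t(x) + γp²_t(x)v²_t(x)) / ((1−γ)p¹_t(x) + γp²_t(x)) generates the mixture probability path p_t := (1−γ)p¹_t + γp²_t; i.e., the continuity equation ∂_t p_t(x) + div_x(p_t(x) v_t(x)) = 0 holds for all t ∈ (0,1) and x ∈ ℝ^d. -/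
open MeasureTheory
open scoped ENNReal NNReal

noncomputable section

/-- If `v¹` generates `p¹` and `v²` generates `p²` via the continuity
equation, then the density-weighted mixture vector field generates the mixture path
`(1−γ)p¹ + γp²`. -/
theorem mixture_vector_field_generates_mixture_path {d : ℕ}
    (γ : ℝ) (hγ0 : 0 ≤ γ) (hγ1 : γ ≤ 1)
    (p1 p2 : ℝ → EuclideanSpace ℝ (Fin d) → ℝ)
    (v1 v2 : ℝ → EuclideanSpace ℝ (Fin d) → EuclideanSpace ℝ (Fin d))
    (hp1C1 : ContDiff ℝ 1 fun q : ℝ × EuclideanSpace ℝ (Fin d) => p1 q.1 q.2)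
    (hp2C1 : ContDiff ℝ 1 fun q : ℝ × EuclideanSpace ℝ (Fin d) => p2 q.1 q.2)
    (hv1C1 : ContDiff ℝ 1 fun q : ℝ × EuclideanSpace ℝ (Fin d) => v1 q.1 q.2)
    (hv2C1 : ContDiff ℝ 1 fun q : ℝ × EuclideanSpace ℝ (Fin d) => v2 q.1 q.2)
    (hp1nn : ∀ t x, 0 ≤ p1 t x) (hp2nn : ∀ t x, 0 ≤ p2 t x)
    (hp1int : ∀ t, (∫ x, p1 t x) = 1) (hp2int : ∀ t, (∫ x, p2 t x) = 1)
    (hgen1 : ∀ t ∈ Set.Ioo (0 : ℝ) 1, ∀ x,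
      deriv (fun τ => p1 τ x) t + diverg (fun y => p1 t y • v1 t y) x = 0)
    (hgen2 : ∀ t ∈ Set.Ioo (0 : ℝ) 1, ∀ x,
      deriv (fun τ => p2 τ x) t + diverg (fun y => p2 t y • v2 t y) x = 0)
    (hpos : ∀ t x, 0 < (1 - γ) * p1 t x + γ * p2 t x)
    (v : ℝ → EuclideanSpace ℝ (Fin d) → EuclideanSpace ℝ (Fin d))
    (hv : ∀ t x, v t x = ((1 - γ) * p1 t x + γ * p2 t x)⁻¹ •
        (((1 - γ) * p1 t x) • v1 t x + (γ * p2 t x) • v2 t x)) :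
    ∀ t ∈ Set.Ioo (0 : ℝ) 1, ∀ x,
      deriv (fun τ => (1 - γ) * p1 τ x + γ * p2 τ x) t +
        diverg (fun y => ((1 - γ) * p1 t y + γ * p2 t y) • v t y) x = 0 := by

  intro t ht x
  have hd1 : Differentiable ℝ (fun y => p1 t y • v1 t y) := by
    have h1 : Differentiable ℝ (fun y : EuclideanSpace ℝ (Fin d) => p1 t y) :=
      (hp1C1.differentiable one_ne_zero).comp ((differentiable_const t).prodMk differentiable_id)
    have h2 : Differentiable ℝ (fun y : EuclideanSpace ℝ (Fin d) => v1 t y) :=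
      (hv1C1.differentiable one_ne_zero).comp ((differentiable_const t).prodMk differentiable_id)
    exact h1.smul h2
  have hd2 : Differentiable ℝ (fun y => p2 t y • v2 t y) := by
    have h1 : Differentiable ℝ (fun y : EuclideanSpace ℝ (Fin d) => p2 t y) :=
      (hp2C1.differentiable one_ne_zero).comp ((differentiable_const t).prodMk differentiable_id)
    have h2 : Differentiable ℝ (fun y : EuclideanSpace ℝ (Fin d) => v2 t y) :=
      (hv2C1.differentiable one_ne_zero).comp ((differentiable_const t).prodMk differentiable_id)
    exact h1.smul h2
  have hfun : (fun y => ((1 - γ) * p1 t y + γ * p2 t y) • v t y)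
      = fun y => (1 - γ) • (p1 t y • v1 t y) + γ • (p2 t y • v2 t y) := by
    funext y
    rw [hv, smul_inv_smul₀ (hpos t y).ne', mul_smul, mul_smul]
  have hdt1 : DifferentiableAt ℝ (fun τ => p1 τ x) t :=
    ((hp1C1.differentiable one_ne_zero).comp
      (differentiable_id.prodMk (differentiable_const x))).differentiableAt
  have hdt2 : DifferentiableAt ℝ (fun τ => p2 τ x) t :=
    ((hp2C1.differentiable one_ne_zero).comp
      (differentiable_id.prodMk (differentiable_const x))).differentiableAt
  have hderiv : deriv (fun τ => (1 - γ) * p1 τ x + γ * p2 τ x) t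
      = (1 - γ) * deriv (fun τ => p1 τ x) t + γ * deriv (fun τ => p2 τ x) t := by
    rw [deriv_fun_add (hdt1.const_mul _) (hdt2.const_mul _), deriv_const_mul _ hdt1,
      deriv_const_mul _ hdt2]
  have hdiv : diverg (fun y => (1 - γ) • (p1 t y • v1 t y) + γ • (p2 t y • v2 t y)) x
      = (1 - γ) * diverg (fun y => p1 t y • v1 t y) x
        + γ * diverg (fun y => p2 t y • v2 t y) x := by
    unfold diverg
    rw [Finset.mul_sum, Finset.mul_sum, ← Finset.sum_add_distrib]
    refine Finset.sum_congr rfl fun i _ => ?_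
    rw [fderiv_fun_add ((hd1 x).fun_const_smul _) ((hd2 x).fun_const_smul _),
      fderiv_fun_const_smul (hd1 x), fderiv_fun_const_smul (hd2 x)]
    simp [ContinuousLinearMap.add_apply, ContinuousLinearMap.smul_apply,
      PiLp.add_apply, PiLp.smul_apply, smul_eq_mul]
  rw [hfun, hderiv, hdiv]
  have h1 := hgen1 t ht x
  have h2 := hgen2 t ht x
  linear_combination (1 - γ) * h1 + γ * h2
end
end

section
/- Let γ ∈ [0,1], fix t, and let p¹_t, p²_t be probability densities on ℝ^d and v¹_t, v²_t : ℝ^d → ℝ^d measurable vector fields with ∫‖v¹_t‖² p¹_t dx < ∞ and ∫‖v²_t‖² p²_t dx < ∞; assume (1−γ)p¹_t(x) + γp²_t(x) > 0 for all x. Then the vector field v_t(x) := ((1−γ)p¹_t(x)v¹_t(x) + γp²_t(x)v²_t(x)) / ((1−γ)p¹_t(x) + γp²_t(x)) minimizes the mixed quadratic flow-matching loss over all measurable vector fields: for every measurable w : ℝ^d → ℝ^d, (1−γ)∫‖v_t(x)−v¹_t(x)‖² p¹_t(x)dx + γ∫‖v_t(x)−v²_t(x)‖² p²_t(x)dx ≤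 (1−γ)∫‖w(x)−v¹_t(x)‖² p¹_t(x)dx + γ∫‖w(x)−v²_t(x)‖² p²_t(x)dx. -/
open MeasureTheory
open scoped ENNReal NNReal

noncomputable section

lemma quad_min {E : Type*} [NormedAddCommGroup E] [InnerProductSpace ℝ E]
    (a b : ℝ) (hab : 0 < a + b) (v1 v2 w : E) :
    a * ‖((a+b)⁻¹ • (a•v1 + b•v2)) - v1‖^2 + b * ‖((a+b)⁻¹ • (a•v1 + b•v2)) - v2‖^2
      ≤ a * ‖w - v1‖^2 + b * ‖w - v2‖^2 := by
  set u : E := (a+b)⁻¹ • (a•v1 + b•v2) with hu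
  have hab' : a + b ≠ 0 := ne_of_gt hab
  have hsum : (a+b) • u = a•v1 + b•v2 := by
    rw [hu, smul_smul, mul_inv_cancel₀ hab', one_smul]
  have key : ∀ z : E, a * ‖z - v1‖^2 + b * ‖z - v2‖^2
      = (a+b) * ‖z - u‖^2 + (a*‖v1‖^2 + b*‖v2‖^2 - (a+b)*‖u‖^2) := by
    intro z
    have h1 : ‖z - v1‖^2 = ‖z‖^2 - 2 * inner ℝ z v1 + ‖v1‖^2 := @norm_sub_sq_real E _ _ z v1
    have h2 : ‖z - v2‖^2 = ‖z‖^2 - 2 * inner ℝ z v2 + ‖v2‖^2 := @norm_sub_sq_real E _ _ z v2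
    have h3 : ‖z - u‖^2 = ‖z‖^2 - 2 * inner ℝ z u + ‖u‖^2 := @norm_sub_sq_real E _ _ z u
    have h4 : (a+b) * (inner ℝ z u : ℝ) = a * inner ℝ z v1 + b * inner ℝ z v2 := by
      rw [← real_inner_smul_right, hsum, inner_add_right, real_inner_smul_right,
        real_inner_smul_right]
    rw [h1, h2, h3]
    nlinarith [h4]
  have hz := key w
  have hzu := key u
  have h0 : ‖u - u‖ = 0 := by simp
  rw [hz, hzu, h0]
  have : 0 ≤ (a+b) * ‖w - u‖^2 := mul_nonneg hab.le (sq_nonneg _)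
  nlinarith

/-- The density-weighted mixture vector field minimizes the mixed
quadratic flow-matching loss over all measurable vector fields. -/
theorem mixture_vector_field_minimizes_mixed_flow_matching_loss {d : ℕ}
    (γ : ℝ) (hγ0 : 0 ≤ γ) (hγ1 : γ ≤ 1)
    (p1 p2 : EuclideanSpace ℝ (Fin d) → ℝ)
    (v1 v2 : EuclideanSpace ℝ (Fin d) → EuclideanSpace ℝ (Fin d))
    (hp1meas : Measurable p1) (hp2meas : Measurable p2)
    (hv1meas : Measurable v1) (hv2meas : Measurable v2)
    (hp1nn : ∀ x, 0 ≤ p1 x) (hp2nn : ∀ x, 0 ≤ p2 x)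
    (hp1int : (∫ x, p1 x) = 1) (hp2int : (∫ x, p2 x) = 1)
    (hpos : ∀ x, 0 < (1 - γ) * p1 x + γ * p2 x)
    (hv1L2 : (∫⁻ x, (‖v1 x‖₊ : ℝ≥0∞) ^ (2 : ℕ) * ENNReal.ofReal (p1 x)) < ⊤)
    (hv2L2 : (∫⁻ x, (‖v2 x‖₊ : ℝ≥0∞) ^ (2 : ℕ) * ENNReal.ofReal (p2 x)) < ⊤)
    (v : EuclideanSpace ℝ (Fin d) → EuclideanSpace ℝ (Fin d))
    (hv : ∀ x, v x = ((1 - γ) * p1 x + γ * p2 x)⁻¹ •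
        (((1 - γ) * p1 x) • v1 x + (γ * p2 x) • v2 x)) :
    ∀ w : EuclideanSpace ℝ (Fin d) → EuclideanSpace ℝ (Fin d), Measurable w →
      ENNReal.ofReal (1 - γ) *
          (∫⁻ x, (‖v x - v1 x‖₊ : ℝ≥0∞) ^ (2 : ℕ) * ENNReal.ofReal (p1 x))
        + ENNReal.ofReal γ *
          (∫⁻ x, (‖v x - v2 x‖₊ : ℝ≥0∞) ^ (2 : ℕ) * ENNReal.ofReal (p2 x))
      ≤ ENNReal.ofReal (1 - γ) *
          (∫⁻ x, (‖w x - v1 x‖₊ : ℝ≥0∞) ^ (2 : ℕ) * ENNReal.ofReal (p1 x))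
        + ENNReal.ofReal γ *
          (∫⁻ x, (‖w x - v2 x‖₊ : ℝ≥0∞) ^ (2 : ℕ) * ENNReal.ofReal (p2 x)) := by
  intro w hw
  set c1 : ℝ≥0∞ := ENNReal.ofReal (1 - γ) with hc1
  set c2 : ℝ≥0∞ := ENNReal.ofReal γ with hc2
  have hc1ne : c1 ≠ ⊤ := ENNReal.ofReal_ne_top
  have hc2ne : c2 ≠ ⊤ := ENNReal.ofReal_ne_top
  -- abbreviations for integrands
  set f1 : EuclideanSpace ℝ (Fin d) → ℝ≥0∞ :=
    fun x => (‖v x - v1 x‖₊ : ℝ≥0∞) ^ (2 : ℕ) * ENNReal.ofReal (p1 x) with hf1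
  set f2 : EuclideanSpace ℝ (Fin d) → ℝ≥0∞ :=
    fun x => (‖v x - v2 x‖₊ : ℝ≥0∞) ^ (2 : ℕ) * ENNReal.ofReal (p2 x) with hf2
  set g1 : EuclideanSpace ℝ (Fin d) → ℝ≥0∞ :=
    fun x => (‖w x - v1 x‖₊ : ℝ≥0∞) ^ (2 : ℕ) * ENNReal.ofReal (p1 x) with hg1
  set g2 : EuclideanSpace ℝ (Fin d) → ℝ≥0∞ :=
    fun x => (‖w x - v2 x‖₊ : ℝ≥0∞) ^ (2 : ℕ) * ENNReal.ofReal (p2 x) with hg2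
  have hg1meas : Measurable g1 := by
    refine Measurable.mul (f := fun x => (‖w x - v1 x‖₊ : ℝ≥0∞) ^ (2 : ℕ)) (g := fun x => ENNReal.ofReal (p1 x)) ?_ ?_
    · exact ((measurable_coe_nnreal_ennreal.comp (hw.sub hv1meas).nnnorm).pow measurable_const)
    · exact hp1meas.ennreal_ofReal
  have hg2meas : Measurable g2 := by
    refine Measurable.mul (f := fun x => (‖w x - v2 x‖₊ : ℝ≥0∞) ^ (2 : ℕ)) (g := fun x => ENNReal.ofReal (p2 x)) ?_ ?_
    · exact ((measurable_coe_nnreal_ennreal.comp (hw.sub hv2meas).nnnorm).pow measurable_const)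
    · exact hp2meas.ennreal_ofReal
  -- pointwise inequality
  have hpt : ∀ x, c1 * f1 x + c2 * f2 x ≤ c1 * g1 x + c2 * g2 x := by
    intro x
    have h1γ : 0 ≤ 1 - γ := by linarith
    have e : ∀ (c p : ℝ) (z : EuclideanSpace ℝ (Fin d)), 0 ≤ c → 0 ≤ p →
        ENNReal.ofReal c * ((‖z‖₊ : ℝ≥0∞) ^ (2 : ℕ) * ENNReal.ofReal p)
          = ENNReal.ofReal (c * (‖z‖^2 * p)) := by
      intro c p z hc hp
      rw [← enorm_eq_nnnorm, ← ofReal_norm, ← ENNReal.ofReal_pow (norm_nonneg _),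
        ← ENNReal.ofReal_mul (by positivity), ← ENNReal.ofReal_mul hc]
    rw [hf1, hf2, hg1, hg2]
    simp only
    rw [e _ _ _ h1γ (hp1nn x), e _ _ _ hγ0 (hp2nn x), e _ _ _ h1γ (hp1nn x),
      e _ _ _ hγ0 (hp2nn x), ← ENNReal.ofReal_add (mul_nonneg h1γ (mul_nonneg (sq_nonneg _) (hp1nn x)))
        (mul_nonneg hγ0 (mul_nonneg (sq_nonneg _) (hp2nn x))),
      ← ENNReal.ofReal_add (mul_nonneg h1γ (mul_nonneg (sq_nonneg _) (hp1nn x)))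
        (mul_nonneg hγ0 (mul_nonneg (sq_nonneg _) (hp2nn x)))]
    apply ENNReal.ofReal_le_ofReal
    have hkey := quad_min ((1-γ) * p1 x) (γ * p2 x) (hpos x) (v1 x) (v2 x) (w x)
    rw [← hv x] at hkey
    nlinarith [hkey]
  calc c1 * lintegral volume f1 + c2 * lintegral volume f2
      = (∫⁻ x, c1 * f1 x) + ∫⁻ x, c2 * f2 x := by
        rw [lintegral_const_mul' _ _ hc1ne, lintegral_const_mul' _ _ hc2ne]
    _ ≤ ∫⁻ x, (c1 * f1 x + c2 * f2 x) := le_lintegral_add _ _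
    _ ≤ ∫⁻ x, (c1 * g1 x + c2 * g2 x) := lintegral_mono hpt
    _ = (∫⁻ x, c1 * g1 x) + ∫⁻ x, c2 * g2 x :=
        lintegral_add_left (hg1meas.const_mul c1) _
    _ = c1 * lintegral volume g1 + c2 * lintegral volume g2 := by
        rw [lintegral_const_mul' _ _ hc1ne, lintegral_const_mul' _ _ hc2ne]
end
end

section
/- Fokker–Planck equation for mixtures of diffusion processes. Let γ ∈ [0,1], let g : [0,T] → ℝ be a diffusion coefficient, and let f¹_t, f²_t : ℝ^d → ℝ^d be C¹ drift fields. Suppose p¹_t and p²_t are probability density paths on ℝ^d, jointly C¹ in t and C² in x, satisfying the Fokker–Planck equations ∂_t pⁱ_t(x) = −div_x(pⁱ_t(x) fⁱ_t(x)) + (g(t)²/2)·Δ_x pⁱ_t(x) for i = 1, 2 and all (t,x). Assume the mixture p_t := (1−γ)p¹_t + γp²_t is strictly positive. Then p_t satisfies the Fokker–Planck equation with the same diffusion coefficient g and the mixed drift f_t(x) := ((1−γ)p¹_t(x)f¹_t(x) + γp²_t(x)f²_t(x)) / ((1−γ)p¹_t(x) + γp²_t(x)); that is, ∂_t p_t(x)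 = −div_x(p_t(x) f_t(x)) + (g(t)²/2)·Δ_x p_t(x) for all (t,x). Hence the mixture of the marginal laws of two diffusion processes sharing the same diffusion coefficient is itself generated by a diffusion process with the density-weighted mixed drift. -/
open MeasureTheory
open scoped ENNReal NNReal

noncomputable section

/-- The Laplacian of a scalar field on `ℝ^d` (divergence of the gradient). -/
def laplacian {d : ℕ} (f : EuclideanSpace ℝ (Fin d) → ℝ)
    (x : EuclideanSpace ℝ (Fin d)) : ℝ :=
  ∑ i : Fin d, fderiv ℝ (fun y => fderiv ℝ f y (EuclideanSpace.single i 1)) x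
      (EuclideanSpace.single i 1)


lemma diverg_comb {d : ℕ} (a b : ℝ)
    (F G : EuclideanSpace ℝ (Fin d) → EuclideanSpace ℝ (Fin d))
    (x : EuclideanSpace ℝ (Fin d))
    (hF : DifferentiableAt ℝ F x) (hG : DifferentiableAt ℝ G x) :
    diverg (fun y => a • F y + b • G y) x = a * diverg F x + b * diverg G x := by
  unfold diverg
  rw [Finset.mul_sum, Finset.mul_sum, ← Finset.sum_add_distrib]
  refine Finset.sum_congr rfl fun i _ => ?_
  have : fderiv ℝ (fun y => a • F y + b • G y) x
      = a • fderiv ℝ F x + b • fderiv ℝ G x := by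
    rw [fderiv_fun_add (f := fun y => a • F y) (g := fun y => b • G y) (hF.const_smul a) (hG.const_smul b), fderiv_fun_const_smul hF,
      fderiv_fun_const_smul hG]
  simp [this]

lemma laplacian_comb {d : ℕ} (a b : ℝ)
    (u v : EuclideanSpace ℝ (Fin d) → ℝ)
    (hu : ContDiff ℝ 2 u) (hv : ContDiff ℝ 2 v)
    (x : EuclideanSpace ℝ (Fin d)) :
    laplacian (fun y => a * u y + b * v y) x = a * laplacian u x + b * laplacian v x := by
  unfold laplacian
  rw [Finset.mul_sum, Finset.mul_sum, ← Finset.sum_add_distrib]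
  refine Finset.sum_congr rfl fun i _ => ?_
  have hud : Differentiable ℝ u := hu.differentiable two_ne_zero
  have hvd : Differentiable ℝ v := hv.differentiable two_ne_zero
  have h1 : (fun y => fderiv ℝ (fun z => a * u z + b * v z) y (EuclideanSpace.single i 1))
      = fun y => a * fderiv ℝ u y (EuclideanSpace.single i 1)
          + b * fderiv ℝ v y (EuclideanSpace.single i 1) := by
    funext y
    rw [fderiv_fun_add ((hud y).const_mul a) ((hvd y).const_mul b),
      fderiv_const_mul (hud y) a, fderiv_const_mul (hvd y) b]
    simp
  rw [h1]
  have hu' : DifferentiableAt ℝ (fun y => fderiv ℝ u y (EuclideanSpace.single i 1)) x := by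
    exact ((hu.fderiv_right (m := 1) (by norm_num)).differentiable one_ne_zero x).clm_apply
      (differentiableAt_const _)
  have hv' : DifferentiableAt ℝ (fun y => fderiv ℝ v y (EuclideanSpace.single i 1)) x := by
    exact ((hv.fderiv_right (m := 1) (by norm_num)).differentiable one_ne_zero x).clm_apply
      (differentiableAt_const _)
  rw [fderiv_fun_add (hu'.const_mul a) (hv'.const_mul b), fderiv_const_mul hu' a,
    fderiv_const_mul hv' b]
  simp

/-- Fokker–Planck equation for mixtures of diffusion processes: the mixture
of the marginal laws of two diffusions sharing the same diffusion coefficient satisfies the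
Fokker–Planck equation with the density-weighted mixed drift. -/
theorem fokkerPlanck_mixture {d : ℕ} (T : ℝ)
    (γ : ℝ) (hγ0 : 0 ≤ γ) (hγ1 : γ ≤ 1)
    (g : ℝ → ℝ)
    (f1 f2 : ℝ → EuclideanSpace ℝ (Fin d) → EuclideanSpace ℝ (Fin d))
    (hf1C1 : ∀ t, ContDiff ℝ 1 (f1 t)) (hf2C1 : ∀ t, ContDiff ℝ 1 (f2 t))
    (p1 p2 : ℝ → EuclideanSpace ℝ (Fin d) → ℝ)
    (hp1C1 : ContDiff ℝ 1 fun q : ℝ × EuclideanSpace ℝ (Fin d) => p1 q.1 q.2)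
    (hp2C1 : ContDiff ℝ 1 fun q : ℝ × EuclideanSpace ℝ (Fin d) => p2 q.1 q.2)
    (hp1C2 : ∀ t, ContDiff ℝ 2 (p1 t)) (hp2C2 : ∀ t, ContDiff ℝ 2 (p2 t))
    (hp1nn : ∀ t x, 0 ≤ p1 t x) (hp2nn : ∀ t x, 0 ≤ p2 t x)
    (hp1int : ∀ t, (∫ x, p1 t x) = 1) (hp2int : ∀ t, (∫ x, p2 t x) = 1)
    (hfp1 : ∀ t ∈ Set.Icc (0 : ℝ) T, ∀ x,
      deriv (fun τ => p1 τ x) t =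
        -diverg (fun y => p1 t y • f1 t y) x + g t ^ 2 / 2 * laplacian (p1 t) x)
    (hfp2 : ∀ t ∈ Set.Icc (0 : ℝ) T, ∀ x,
      deriv (fun τ => p2 τ x) t =
        -diverg (fun y => p2 t y • f2 t y) x + g t ^ 2 / 2 * laplacian (p2 t) x)
    (hpos : ∀ t x, 0 < (1 - γ) * p1 t x + γ * p2 t x)
    (f : ℝ → EuclideanSpace ℝ (Fin d) → EuclideanSpace ℝ (Fin d))
    (hf : ∀ t x, f t x = ((1 - γ) * p1 t x + γ * p2 t x)⁻¹ •
        (((1 - γ) * p1 t x) • f1 t x + (γ * p2 t x) • f2 t x)) :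
    ∀ t ∈ Set.Icc (0 : ℝ) T, ∀ x,
      deriv (fun τ => (1 - γ) * p1 τ x + γ * p2 τ x) t =
        -diverg (fun y => ((1 - γ) * p1 t y + γ * p2 t y) • f t y) x +
          g t ^ 2 / 2 * laplacian (fun y => (1 - γ) * p1 t y + γ * p2 t y) x := by
  intro t ht x
  -- time derivative
  have h1t : DifferentiableAt ℝ (fun τ => p1 τ x) t :=
    (hp1C1.differentiable one_ne_zero (t, x)).comp (f := fun τ : ℝ => (τ, x)) t
      (differentiableAt_id.prodMk (differentiableAt_const x))
  have h2t : DifferentiableAt ℝ (fun τ => p2 τ x) t :=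
    (hp2C1.differentiable one_ne_zero (t, x)).comp (f := fun τ : ℝ => (τ, x)) t
      (differentiableAt_id.prodMk (differentiableAt_const x))
  have hderiv : deriv (fun τ => (1 - γ) * p1 τ x + γ * p2 τ x) t
      = (1 - γ) * deriv (fun τ => p1 τ x) t + γ * deriv (fun τ => p2 τ x) t := by
    rw [deriv_fun_add (h1t.const_mul _) (h2t.const_mul _), deriv_const_mul _ h1t,
      deriv_const_mul _ h2t]
  -- rewrite the mixed drift term
  have hfun : (fun y => ((1 - γ) * p1 t y + γ * p2 t y) • f t y)
      = fun y => (1 - γ) • (p1 t y • f1 t y) + γ • (p2 t y • f2 t y) := by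
    funext y
    rw [hf t y, smul_smul, mul_inv_cancel₀ (hpos t y).ne', one_smul, smul_smul, smul_smul]
  have hA : DifferentiableAt ℝ (fun y => p1 t y • f1 t y) x :=
    (((hp1C2 t).differentiable two_ne_zero) x).smul (((hf1C1 t).differentiable one_ne_zero) x)
  have hB : DifferentiableAt ℝ (fun y => p2 t y • f2 t y) x :=
    (((hp2C2 t).differentiable two_ne_zero) x).smul (((hf2C1 t).differentiable one_ne_zero) x)
  have hdiv : diverg (fun y => ((1 - γ) * p1 t y + γ * p2 t y) • f t y) x
      = (1 - γ) * diverg (fun y => p1 t y • f1 t y) x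
        + γ * diverg (fun y => p2 t y • f2 t y) x := by
    rw [hfun]
    exact diverg_comb _ _ _ _ _ hA hB
  have hlap : laplacian (fun y => (1 - γ) * p1 t y + γ * p2 t y) x
      = (1 - γ) * laplacian (p1 t) x + γ * laplacian (p2 t) x :=
    laplacian_comb _ _ _ _ (hp1C2 t) (hp2C2 t) x
  rw [hderiv, hdiv, hlap, hfp1 t ht x, hfp2 t ht x]
  ring
end
end
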